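/- arXiv:1702.06153 — 5 statements merged into one kernel-verified Lean document; each statement's English description precedes it below -/
import Mathlib

section
/- (Lemma, Section II) Fix any coloring of the pairs of vertices. Suppose there is a balanced partition (Â,B̂) with {Â,B̂} ≠ {A,B} such that ∑_{i=1}^m (l_i(Â) + l_i(B̂)) log(p_i/q_i) ≥ ∑_{i=1}^m (l_i(A) + l_i(B)) log(p_i/q_i). Then there exist an integer k with 1 ≤ k ≤ n/4 and sets A_w ⊂ A and B_w ⊂ B with |A_w| = |B_w| = k such that ∑_{i=1}^m [o_i(A_w, B∖B_w) + o_i(B_w, A∖A_w)] log(p_i/q_i) ≥ ∑_{i=1}^m [o_i(A_w, A∖A_w) + o_i(B_w, B∖B_w)] log(p_i/q_i). -/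
open MeasureTheory Finset Filter
open scoped Classical ENNReal

/-- `l_i(S)`: the number of color-`i` edges with both endpoints in `S`. -/
noncomputable def innerCount {n m : ℕ} (ω : Sym2 (Fin n) → Fin (m + 1)) (i : Fin m)
    (S : Finset (Fin n)) : ℕ :=
  (Finset.univ.filter fun e : Sym2 (Fin n) =>
    ¬ e.IsDiag ∧ (∀ v ∈ e, v ∈ S) ∧ ω e = i.succ).card

/-- `o_i(S,T)` (and `E_i[v,S] = crossCount ω i {v} S`): the number of color-`i`
edges with one endpoint in `S` and the other in `T`. -/
noncomputable def crossCount {n m : ℕ} (ω : Sym2 (Fin n) → Fin (m + 1)) (i : Fin m)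
    (S T : Finset (Fin n)) : ℕ :=
  (Finset.univ.filter fun e : Sym2 (Fin n) =>
    ¬ e.IsDiag ∧ (∃ u ∈ S, ∃ v ∈ T, e = s(u, v)) ∧ ω e = i.succ).card

/-- The true community `A = {1, …, n/2}`. -/
def communityA (n : ℕ) : Finset (Fin n) := Finset.univ.filter fun v => (v : ℕ) < n / 2

/-- The weighted inner-edge score `∑ i (l_i(S) + l_i(Sᶜ)) log (p_i/q_i)` of the
balanced partition `(S, Sᶜ)`. -/
noncomputable def score {n m : ℕ} (p q : Fin m → ℝ) (ω : Sym2 (Fin n) → Fin (m + 1))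
    (S : Finset (Fin n)) : ℝ :=
  ∑ i, ((innerCount ω i S : ℝ) + (innerCount ω i Sᶜ : ℝ)) * Real.log (p i / q i)


lemma crossCount_comm {n m : ℕ} (ω : Sym2 (Fin n) → Fin (m + 1)) (i : Fin m)
    (S T : Finset (Fin n)) : crossCount ω i S T = crossCount ω i T S := by
  unfold crossCount
  congr 1
  ext e
  simp only [Finset.mem_filter, Finset.mem_univ, true_and]
  constructor <;> rintro ⟨h1, ⟨u, hu, v, hv, heq⟩, h3⟩ <;>
    exact ⟨h1, ⟨v, hv, u, hu, heq.trans Sym2.eq_swap⟩, h3⟩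

lemma innerCount_union {n m : ℕ} (ω : Sym2 (Fin n) → Fin (m + 1)) (i : Fin m)
    {U V : Finset (Fin n)} (h : Disjoint U V) :
    innerCount ω i (U ∪ V) = innerCount ω i U + innerCount ω i V + crossCount ω i U V := by
  have hd : ∀ x : Fin n, x ∈ U → x ∉ V := fun x hx => Finset.disjoint_left.mp h hx
  unfold innerCount crossCount
  have hex : ∀ a b : Fin n, (∃ u ∈ U, ∃ v ∈ V, s(a, b) = s(u, v)) ↔
      (a ∈ U ∧ b ∈ V) ∨ (b ∈ U ∧ a ∈ V) := by
    intro a b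
    constructor
    · rintro ⟨u, hu, v, hv, heq⟩
      rw [Sym2.eq_iff] at heq
      rcases heq with ⟨rfl, rfl⟩ | ⟨rfl, rfl⟩ <;> tauto
    · rintro (⟨h1, h2⟩ | ⟨h1, h2⟩)
      exacts [⟨a, h1, b, h2, rfl⟩, ⟨b, h1, a, h2, Sym2.eq_swap⟩]
  have d1 : Disjoint
      (Finset.univ.filter fun e : Sym2 (Fin n) =>
        ¬ e.IsDiag ∧ (∀ v ∈ e, v ∈ U) ∧ ω e = i.succ)
      (Finset.univ.filter fun e : Sym2 (Fin n) =>
        ¬ e.IsDiag ∧ (∀ v ∈ e, v ∈ V) ∧ ω e = i.succ) := by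
    rw [Finset.disjoint_filter]
    intro e _
    induction e using Sym2.ind with
    | _ a b =>
      simp only [Sym2.mem_iff, forall_eq_or_imp, forall_eq]
      have := hd a; tauto
  have d2 : Disjoint
      ((Finset.univ.filter fun e : Sym2 (Fin n) =>
        ¬ e.IsDiag ∧ (∀ v ∈ e, v ∈ U) ∧ ω e = i.succ) ∪
       (Finset.univ.filter fun e : Sym2 (Fin n) =>
        ¬ e.IsDiag ∧ (∀ v ∈ e, v ∈ V) ∧ ω e = i.succ))
      (Finset.univ.filter fun e : Sym2 (Fin n) =>
        ¬ e.IsDiag ∧ (∃ u ∈ U, ∃ v ∈ V, e = s(u, v)) ∧ ω e = i.succ) := by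
    rw [Finset.disjoint_left]
    intro e he1 he2
    induction e using Sym2.ind with
    | _ a b =>
      simp only [Finset.mem_union, Finset.mem_filter, Finset.mem_univ, true_and,
        Sym2.mem_iff, forall_eq_or_imp, forall_eq, hex] at he1 he2
      have h1 := hd a; have h2 := hd b; tauto
  rw [← Finset.card_union_of_disjoint d1, ← Finset.card_union_of_disjoint d2]
  congr 1
  ext e
  induction e using Sym2.ind with
  | _ a b =>
    simp only [Finset.mem_union, Finset.mem_filter, Finset.mem_univ, true_and,
      Sym2.mem_iff, forall_eq_or_imp, forall_eq, hex, Sym2.isDiag_iff_proj_eq]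
    tauto

lemma swap_key_nat {n m : ℕ} (ω : Sym2 (Fin n) → Fin (m + 1)) (i : Fin m)
    (X Y Aw Bw : Finset (Fin n)) (hXA : Disjoint X Aw) (hXB : Disjoint X Bw)
    (hYA : Disjoint Y Aw) (hYB : Disjoint Y Bw) :
    innerCount ω i (X ∪ Bw) + innerCount ω i (Y ∪ Aw)
      + (crossCount ω i Aw X + crossCount ω i Bw Y)
    = innerCount ω i (X ∪ Aw) + innerCount ω i (Y ∪ Bw)
      + (crossCount ω i Aw Y + crossCount ω i Bw X) := by
  rw [innerCount_union ω i hXB, innerCount_union ω i hYA, innerCount_union ω i hXA,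
    innerCount_union ω i hYB, crossCount_comm ω i Aw X, crossCount_comm ω i Bw Y,
    crossCount_comm ω i Aw Y, crossCount_comm ω i Bw X]
  omega

lemma communityA_card' (n : ℕ) : (communityA n).card = n / 2 := by
  unfold communityA
  conv_rhs => rw [← Finset.card_range (n / 2)]
  refine Finset.card_bij (fun v _ => (v : ℕ)) ?_ ?_ ?_
  · intro a ha; simp only [Finset.mem_filter] at ha; simpa using ha.2
  · intro a ha b hb hab; exact Fin.val_injective hab
  · intro b hb
    simp only [Finset.mem_range] at hb
    exact ⟨⟨b, lt_of_lt_of_le hb (Nat.div_le_self n 2)⟩, by simpa using hb, rfl⟩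

theorem exists_swap_sets (n m : ℕ) (hn : Even n) (hm : 0 < m)
    (p q : Fin m → ℝ) (hp : ∀ i, 0 < p i) (hq : ∀ i, 0 < q i)
    (ω : Sym2 (Fin n) → Fin (m + 1))
    (hF : ∃ S : Finset (Fin n), S.card = n / 2 ∧ S ≠ communityA n ∧
      S ≠ (communityA n)ᶜ ∧ score p q ω (communityA n) ≤ score p q ω S) :
    ∃ k : ℕ, 1 ≤ k ∧ k ≤ n / 4 ∧
      ∃ Aw Bw : Finset (Fin n), Aw ⊆ communityA n ∧ Bw ⊆ (communityA n)ᶜ ∧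
        Aw.card = k ∧ Bw.card = k ∧
        ∑ i, ((crossCount ω i Aw ((communityA n)ᶜ \ Bw) : ℝ) +
              (crossCount ω i Bw (communityA n \ Aw) : ℝ)) * Real.log (p i / q i) ≥
        ∑ i, ((crossCount ω i Aw (communityA n \ Aw) : ℝ) +
              (crossCount ω i Bw ((communityA n)ᶜ \ Bw) : ℝ)) * Real.log (p i / q i) := by
  classical
  have hAcard : (communityA n).card = n / 2 := communityA_card' n
  have key : ∀ T : Finset (Fin n), T.card = n / 2 → T ≠ communityA n →
      ((communityA n) \ T).card ≤ n / 4 →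
      score p q ω (communityA n) ≤ score p q ω T →
      ∃ k : ℕ, 1 ≤ k ∧ k ≤ n / 4 ∧
      ∃ Aw Bw : Finset (Fin n), Aw ⊆ communityA n ∧ Bw ⊆ (communityA n)ᶜ ∧
        Aw.card = k ∧ Bw.card = k ∧
        ∑ i, ((crossCount ω i Aw ((communityA n)ᶜ \ Bw) : ℝ) +
              (crossCount ω i Bw (communityA n \ Aw) : ℝ)) * Real.log (p i / q i) ≥
        ∑ i, ((crossCount ω i Aw (communityA n \ Aw) : ℝ) +
              (crossCount ω i Bw ((communityA n)ᶜ \ Bw) : ℝ)) * Real.log (p i / q i) := by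
    intro T hT1 hT2 hT3 hT4
    set A := communityA n with hAdef
    set Aw := A \ T with hAw
    set Bw := T \ A with hBw
    set X := A ∩ T with hX
    set Y := Aᶜ ∩ Tᶜ with hY
    have uA : X ∪ Aw = A := by ext x; simp [hX, hAw] <;> tauto
    have uAc : Y ∪ Bw = Aᶜ := by ext x; simp [hY, hBw] <;> tauto
    have uT : X ∪ Bw = T := by ext x; simp [hX, hBw] <;> tauto
    have uTc : Y ∪ Aw = Tᶜ := by ext x; simp [hY, hAw] <;> tauto
    have e1 : A \ Aw = X := by ext x; simp [hX, hAw] <;> tauto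
    have e2 : Aᶜ \ Bw = Y := by ext x; simp [hY, hBw] <;> tauto
    have dXA : Disjoint X Aw := by
      rw [Finset.disjoint_left]; intro x hx hx'
      rw [hX] at hx; rw [hAw] at hx'; simp at hx hx'; tauto
    have dXB : Disjoint X Bw := by
      rw [Finset.disjoint_left]; intro x hx hx'
      rw [hX] at hx; rw [hBw] at hx'; simp at hx hx'; tauto
    have dYA : Disjoint Y Aw := by
      rw [Finset.disjoint_left]; intro x hx hx'
      rw [hY] at hx; rw [hAw] at hx'; simp at hx hx'; tauto
    have dYB : Disjoint Y Bw := by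
      rw [Finset.disjoint_left]; intro x hx hx'
      rw [hY] at hx; rw [hBw] at hx'; simp at hx hx'; tauto
    have hkcard : Bw.card = Aw.card := by
      have h1 := Finset.card_sdiff_add_card_inter A T
      have h2 := Finset.card_sdiff_add_card_inter T A
      rw [Finset.inter_comm T A] at h2
      rw [← hAw, ← hX, hAcard] at h1
      rw [← hBw, ← hX, hT1] at h2
      omega
    have hk1 : 1 ≤ Aw.card := by
      rcases Nat.eq_zero_or_pos Aw.card with h0 | h
      · exfalso
        rw [hAw] at h0
        have hsub : A ⊆ T := Finset.sdiff_eq_empty_iff_subset.mp (Finset.card_eq_zero.mp h0)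
        exact hT2 (Finset.eq_of_subset_of_card_le hsub (by rw [hT1, hAcard])).symm
      · exact h
    refine ⟨Aw.card, hk1, hT3, Aw, Bw, ?_, ?_, rfl, hkcard, ?_⟩
    · rw [hAw]; exact Finset.sdiff_subset
    · intro x hx; rw [hBw] at hx
      simp only [Finset.mem_sdiff] at hx
      simp [Finset.mem_compl, hx.2]
    · rw [e1, e2]
      unfold score at hT4
      rw [← uAc, ← uA, ← uTc, ← uT] at hT4
      rw [ge_iff_le, ← sub_nonneg]
      have hEq : ∀ i : Fin m,
          ((crossCount ω i Aw Y : ℝ) + crossCount ω i Bw X) * Real.log (p i / q i) -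
            ((crossCount ω i Aw X : ℝ) + crossCount ω i Bw Y) * Real.log (p i / q i)
          = ((innerCount ω i (X ∪ Bw) : ℝ) + innerCount ω i (Y ∪ Aw)) * Real.log (p i / q i) -
            ((innerCount ω i (X ∪ Aw) : ℝ) + innerCount ω i (Y ∪ Bw)) * Real.log (p i / q i) := by
        intro i
        have h := swap_key_nat ω i X Y Aw Bw dXA dXB dYA dYB
        have hR : (innerCount ω i (X ∪ Bw) : ℝ) + innerCount ω i (Y ∪ Aw)
            + (crossCount ω i Aw X + crossCount ω i Bw Y)
            = innerCount ω i (X ∪ Aw) + innerCount ω i (Y ∪ Bw)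
            + (crossCount ω i Aw Y + crossCount ω i Bw X) := by exact_mod_cast h
        linear_combination (-(Real.log (p i / q i))) * hR
      have h1 : ∑ i, ((crossCount ω i Aw Y : ℝ) + crossCount ω i Bw X) * Real.log (p i / q i) -
          ∑ i, ((crossCount ω i Aw X : ℝ) + crossCount ω i Bw Y) * Real.log (p i / q i)
          = (∑ i, ((innerCount ω i (X ∪ Bw) : ℝ) + innerCount ω i (Y ∪ Aw)) * Real.log (p i / q i)) -
            ∑ i, ((innerCount ω i (X ∪ Aw) : ℝ) + innerCount ω i (Y ∪ Bw)) * Real.log (p i / q i) := by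
        rw [← Finset.sum_sub_distrib, ← Finset.sum_sub_distrib]
        exact Finset.sum_congr rfl fun i _ => hEq i
      rw [h1]
      linarith [hT4]
  obtain ⟨S, hS1, hS2, hS3, hS4⟩ := hF
  have hsplit : ((communityA n) \ S).card + ((communityA n) \ Sᶜ).card = n / 2 := by
    have h1 : (communityA n) \ Sᶜ = (communityA n) ∩ S := by ext x; simp
    rw [h1, Finset.card_sdiff_add_card_inter, hAcard]
  rcases le_or_gt ((communityA n \ S).card) (n / 4) with hle | hlt
  · exact key S hS1 hS2 hle hS4
  · have h2 : ((communityA n) \ Sᶜ).card ≤ n / 4 := by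
      obtain ⟨h, rfl⟩ := hn; omega
    have hc1 : Sᶜ.card = n / 2 := by
      rw [Finset.card_compl, Fintype.card_fin, hS1]
      obtain ⟨h, rfl⟩ := hn; omega
    have hc2 : Sᶜ ≠ communityA n := by
      intro hh
      apply hS3
      have := congrArg (·ᶜ) hh
      simpa using this
    have hc4 : score p q ω (communityA n) ≤ score p q ω Sᶜ := by
      have hsc : score p q ω Sᶜ = score p q ω S := by
        unfold score
        rw [compl_compl]
        exact Finset.sum_congr rfl fun i _ => by ring
      rw [hsc]; exact hS4
    exact key Sᶜ hc1 hc2 h2 hc4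
end

section
/- (Union bound on the failure probability) In the colored stochastic block model, Pr(F) ≤ ∑_{k=1}^{⌊n/4⌋} C(n/2, k)² · P_n^{(k)}, where C(n/2,k) is the binomial coefficient and P_n^{(k)} = Pr( ∑_{i'=1}^{2k(n/2−k)} (Z_{i'} − W_{i'}) ≥ 0 ) for i.i.d. random variables W_{i'}, Z_{i'} distributed as W and Z respectively, the two families being mutually independent. -/
open MeasureTheory Finset Filter
open scoped Classical ENNReal

/-- Distribution of a single colored edge: color `i.succ` with probability `r i`,
`0` (no edge) with the remaining probability. -/
noncomputable def colorMeasure {m : ℕ} (r : Fin m → ℝ) : Measure (Fin (m + 1)) :=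
  (1 - ∑ i, ENNReal.ofReal (r i)) • Measure.dirac 0
    + ∑ i, ENNReal.ofReal (r i) • Measure.dirac i.succ

/-- Two vertices on the same side of the true partition `A = {v | v < n/2}`. -/
def sameSide (n : ℕ) : Sym2 (Fin n) → Prop :=
  Sym2.lift ⟨fun u v => ((u : ℕ) < n / 2 ↔ (v : ℕ) < n / 2), fun u v => propext Iff.comm⟩

/-- The colored stochastic block model: pairs get independent colors,
within-community pairs with probabilities `p`, across with `q`. -/
noncomputable def sbmMeasure (n m : ℕ) (p q : Fin m → ℝ) :
    Measure (Sym2 (Fin n) → Fin (m + 1)) :=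
  Measure.pi fun e => if sameSide n e then colorMeasure p else colorMeasure q

/-- `F`: the event that maximum likelihood fails, i.e. some balanced partition other
than `(A, B)` has weighted inner-edge score at least that of `(A, B)`. -/
def failEvent (n m : ℕ) (p q : Fin m → ℝ) : Set (Sym2 (Fin n) → Fin (m + 1)) :=
  {ω | ∃ S : Finset (Fin n), S.card = n / 2 ∧ S ≠ communityA n ∧ S ≠ (communityA n)ᶜ ∧
    score p q ω (communityA n) ≤ score p q ω S}

/-- Law of `W`: value `log (p_k/q_k)` with probability `p_k`, `0` otherwise. -/
noncomputable def Wdist {m : ℕ} (p q : Fin m → ℝ) : Measure ℝ :=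
  (1 - ∑ k, ENNReal.ofReal (p k)) • Measure.dirac 0
    + ∑ k, ENNReal.ofReal (p k) • Measure.dirac (Real.log (p k / q k))
/-- Law of `Z`: value `log (p_k/q_k)` with probability `q_k`, `0` otherwise. -/
noncomputable def Zdist {m : ℕ} (p q : Fin m → ℝ) : Measure ℝ :=
  (1 - ∑ k, ENNReal.ofReal (q k)) • Measure.dirac 0
    + ∑ k, ENNReal.ofReal (q k) • Measure.dirac (Real.log (p k / q k))

/-- `P_n^{(k)}`-type probability: `Pr(∑_{j=1}^N (Z_j − W_j) ≥ 0)` for i.i.d. `Z_j ~ Z`,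
`W_j ~ W`, all independent. -/
noncomputable def diffProb {m : ℕ} (p q : Fin m → ℝ) (N : ℕ) : ℝ≥0∞ :=
  Measure.pi (fun _ : Fin N => (Zdist p q).prod (Wdist p q))
    {f | (0 : ℝ) ≤ ∑ j, ((f j).1 - (f j).2)}

set_option maxHeartbeats 1000000

section Aux

variable {n m : ℕ}

noncomputable def valFn (p q : Fin m → ℝ) : Fin (m + 1) → ℝ :=
  Fin.cases 0 fun i => Real.log (p i / q i)

@[simp] lemma valFn_zero (p q : Fin m → ℝ) : valFn p q 0 = 0 := rfl

@[simp] lemma valFn_succ (p q : Fin m → ℝ) (i : Fin m) :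
    valFn p q i.succ = Real.log (p i / q i) := by simp [valFn]

lemma valFn_eq_sum (p q : Fin m → ℝ) (c : Fin (m + 1)) :
    valFn p q c = ∑ i, if c = i.succ then Real.log (p i / q i) else 0 := by
  induction c using Fin.cases with
  | zero =>
    rw [valFn_zero]
    exact (Finset.sum_eq_zero fun i _ => if_neg fun h => Fin.succ_ne_zero i h.symm).symm
  | succ j =>
    rw [valFn_succ, Finset.sum_eq_single j]
    · rw [if_pos rfl]
    · intro i _ hne
      exact if_neg fun h => hne ((Fin.succ_injective _ h).symm)
    · intro h; exact absurd (Finset.mem_univ j) h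

def samePart (S : Finset (Fin n)) : Sym2 (Fin n) → Prop :=
  Sym2.lift ⟨fun u v => (u ∈ S ↔ v ∈ S), fun u v => propext Iff.comm⟩

noncomputable def innerPairs (S : Finset (Fin n)) : Finset (Sym2 (Fin n)) :=
  Finset.univ.filter fun e => ¬ e.IsDiag ∧ samePart S e

noncomputable def crossPairs (X Y : Finset (Fin n)) : Finset (Sym2 (Fin n)) :=
  Finset.univ.filter fun e =>
    Sym2.lift ⟨fun u v => (u ∈ X ∧ v ∈ Y) ∨ (v ∈ X ∧ u ∈ Y), fun u v => propext or_comm⟩ e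

lemma mem_innerPairs {S : Finset (Fin n)} {u v : Fin n} :
    s(u, v) ∈ innerPairs S ↔ u ≠ v ∧ (u ∈ S ↔ v ∈ S) := by
  rw [innerPairs, Finset.mem_filter]
  simp [samePart, Sym2.mk_isDiag_iff]

lemma mem_crossPairs {X Y : Finset (Fin n)} {u v : Fin n} :
    s(u, v) ∈ crossPairs X Y ↔ (u ∈ X ∧ v ∈ Y) ∨ (v ∈ X ∧ u ∈ Y) := by
  simp [crossPairs]

lemma card_crossPairs {X Y : Finset (Fin n)} (h : Disjoint X Y) :
    (crossPairs X Y).card = X.card * Y.card := by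
  rw [← Finset.card_product]
  symm
  apply Finset.card_bij (fun a _ => s(a.1, a.2))
  · rintro ⟨u, v⟩ huv
    rw [Finset.mem_product] at huv
    exact mem_crossPairs.mpr (Or.inl ⟨huv.1, huv.2⟩)
  · rintro ⟨u₁, v₁⟩ h₁ ⟨u₂, v₂⟩ h₂ heq
    rw [Finset.mem_product] at h₁ h₂
    rw [Sym2.eq_iff] at heq
    rcases heq with ⟨h1, h2⟩ | ⟨h1, h2⟩
    · exact Prod.ext h1 h2
    · exact ((Finset.disjoint_left.mp h h₁.1) (by rw [h1]; exact h₂.2)).elim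
  · intro e he
    induction e using Sym2.ind with
    | _ u v =>
      rcases mem_crossPairs.mp he with ⟨hu, hv⟩ | ⟨hv, hu⟩
      · exact ⟨(u, v), Finset.mem_product.mpr ⟨hu, hv⟩, rfl⟩
      · exact ⟨(v, u), Finset.mem_product.mpr ⟨hv, hu⟩, Sym2.eq_swap⟩

lemma innerCount_add {ω : Sym2 (Fin n) → Fin (m + 1)} {i : Fin m} (S : Finset (Fin n)) :
    innerCount ω i S + innerCount ω i Sᶜ =
      ((innerPairs S).filter fun e => ω e = i.succ).card := by
  rw [innerCount, innerCount, ← Finset.card_union_of_disjoint ?hd]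
  case hd =>
    rw [Finset.disjoint_left]
    intro e h1 h2
    induction e using Sym2.ind with
    | _ u v =>
      simp only [Finset.mem_filter, Sym2.ball, Finset.mem_compl] at h1 h2
      tauto
  congr 1
  ext e
  induction e using Sym2.ind with
  | _ u v =>
    simp only [Finset.mem_union, Finset.mem_filter, Finset.mem_univ, true_and,
      Sym2.mk_isDiag_iff, Sym2.ball, Finset.mem_compl, mem_innerPairs, ne_eq]
    tauto

lemma score_eq (p q : Fin m → ℝ) (ω : Sym2 (Fin n) → Fin (m + 1)) (S : Finset (Fin n)) :
    score p q ω S = ∑ e ∈ innerPairs S, valFn p q (ω e) := by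
  rw [score]
  rw [Finset.sum_congr rfl fun e (_ : e ∈ innerPairs S) => valFn_eq_sum p q (ω e),
    Finset.sum_comm]
  refine Finset.sum_congr rfl fun i _ => ?_
  have h2 : ∑ e ∈ innerPairs S, (if ω e = i.succ then Real.log (p i / q i) else 0)
      = (((innerPairs S).filter fun e => ω e = i.succ).card : ℝ) * Real.log (p i / q i) := by
    rw [← Finset.sum_filter, Finset.sum_const, nsmul_eq_mul]
  rw [h2, ← innerCount_add S]
  push_cast
  ring

lemma score_compl (p q : Fin m → ℝ) (ω : Sym2 (Fin n) → Fin (m + 1)) (S : Finset (Fin n)) :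
    score p q ω Sᶜ = score p q ω S := by
  unfold score
  refine Finset.sum_congr rfl fun i _ => ?_
  rw [compl_compl, add_comm]

lemma samePart_communityA {e : Sym2 (Fin n)} : samePart (communityA n) e ↔ sameSide n e := by
  induction e using Sym2.ind with
  | _ u v =>
    simp only [samePart, sameSide, Sym2.lift_mk, communityA, Finset.mem_filter,
      Finset.mem_univ, true_and]

lemma card_communityA : (communityA n).card = n / 2 := by
  have h : n / 2 ≤ n := Nat.div_le_self n 2
  have : communityA n = Finset.univ.map (Fin.castLEEmb h) := by
    ext v
    simp only [communityA, Finset.mem_filter, Finset.mem_univ, true_and, Finset.mem_map]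
    constructor
    · intro hv
      exact ⟨⟨(v : ℕ), hv⟩, by ext; simp [Fin.castLEEmb]⟩
    · rintro ⟨j, -, rfl⟩
      simpa using j.isLt
  rw [this, Finset.card_map, Finset.card_univ, Fintype.card_fin]

lemma card_communityA_compl (hn : Even n) : ((communityA n)ᶜ).card = n / 2 := by
  rw [Finset.card_compl, Fintype.card_fin, card_communityA]
  obtain ⟨r, rfl⟩ := hn
  omega

lemma G_decomp (S : Finset (Fin n)) :
    innerPairs S \ innerPairs (communityA n) =
      crossPairs (communityA n ∩ S) ((communityA n)ᶜ ∩ S) ∪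
        crossPairs (communityA n \ S) ((communityA n)ᶜ \ S) := by
  ext e
  induction e using Sym2.ind with
  | _ u v =>
    have hd : ¬(u ∈ communityA n ↔ v ∈ communityA n) → ¬(u = v) :=
      fun h hc => h (by rw [hc])
    simp only [Finset.mem_sdiff, mem_innerPairs, Finset.mem_union, mem_crossPairs,
      Finset.mem_inter, Finset.mem_compl, Finset.mem_sdiff, ne_eq, not_and]
    tauto

lemma H_decomp (S : Finset (Fin n)) :
    innerPairs (communityA n) \ innerPairs S =
      crossPairs (communityA n ∩ S) (communityA n \ S) ∪
        crossPairs ((communityA n)ᶜ ∩ S) ((communityA n)ᶜ \ S) := by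
  ext e
  induction e using Sym2.ind with
  | _ u v =>
    have hd : ¬(u ∈ S ↔ v ∈ S) → ¬(u = v) := fun h hc => h (by rw [hc])
    simp only [Finset.mem_sdiff, mem_innerPairs, Finset.mem_union, mem_crossPairs,
      Finset.mem_inter, Finset.mem_compl, Finset.mem_sdiff, ne_eq, not_and]
    tauto

lemma crossPairs_disjoint_aux {X Y X' Y' : Finset (Fin n)}
    (h : ∀ u, u ∈ X ∪ Y → u ∈ X' ∪ Y' → False) :
    Disjoint (crossPairs X Y) (crossPairs X' Y') := by
  rw [Finset.disjoint_left]
  intro e h1 h2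
  induction e using Sym2.ind with
  | _ u v =>
    rw [mem_crossPairs] at h1 h2
    rcases h1 with ⟨hu, hv⟩ | ⟨hv, hu⟩ <;> rcases h2 with ⟨hu', hv'⟩ | ⟨hv', hu'⟩ <;>
      [exact h u (by simp [hu]) (by simp [hu']);
       exact h u (by simp [hu]) (by simp [hu', Finset.mem_union]);
       exact h u (by simp [hu, Finset.mem_union]) (by simp [hu']);
       exact h u (by simp [hu, Finset.mem_union]) (by simp [hu', Finset.mem_union])]

section Cards

variable (hn : Even n) {S : Finset (Fin n)} (hS : S.card = n / 2)
include hn hS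

lemma aux_cards :
    ((communityA n) ∩ S).card = n / 2 - (S \ communityA n).card ∧
    ((communityA n)ᶜ ∩ S).card = (S \ communityA n).card ∧
    ((communityA n) \ S).card = (S \ communityA n).card ∧
    ((communityA n)ᶜ \ S).card = n / 2 - (S \ communityA n).card := by
  set A := communityA n with hAdef
  have hA : A.card = n / 2 := card_communityA
  have hAc : Aᶜ.card = n / 2 := card_communityA_compl hn
  set k := (S \ A).card with hk
  have e1 := Finset.card_inter_add_card_sdiff S A
  have e2 := Finset.card_inter_add_card_sdiff A S
  have e3 := Finset.card_inter_add_card_sdiff Aᶜ S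
  have hcomm : (S ∩ A).card = (A ∩ S).card := by rw [Finset.inter_comm]
  have h2 : Aᶜ ∩ S = S \ A := by
    ext a; simp only [Finset.mem_inter, Finset.mem_compl, Finset.mem_sdiff]; tauto
  have h2' : Aᶜ ∩ S = Aᶜ ∩ S := rfl
  have e3' : (Aᶜ ∩ S).card = k := by rw [h2]
  refine ⟨by omega, e3', by omega, by omega⟩

lemma G_card :
    (innerPairs S \ innerPairs (communityA n)).card
      = 2 * (S \ communityA n).card * (n / 2 - (S \ communityA n).card) := by
  obtain ⟨c1, c2, c3, c4⟩ := aux_cards hn hS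
  rw [G_decomp, Finset.card_union_of_disjoint, card_crossPairs, card_crossPairs, c1, c2, c3, c4]
  · generalize n / 2 - (S \ communityA n).card = l
    ring
  · rw [Finset.disjoint_left]
    intro a ha hb
    simp only [Finset.mem_inter, Finset.mem_sdiff, Finset.mem_compl] at ha hb
    tauto
  · rw [Finset.disjoint_left]
    intro a ha hb
    simp only [Finset.mem_inter, Finset.mem_sdiff, Finset.mem_compl] at ha hb
    tauto
  · apply crossPairs_disjoint_aux
    intro u h1 h2
    simp only [Finset.mem_union, Finset.mem_inter, Finset.mem_sdiff, Finset.mem_compl] at h1 h2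
    tauto

lemma H_card :
    (innerPairs (communityA n) \ innerPairs S).card
      = 2 * (S \ communityA n).card * (n / 2 - (S \ communityA n).card) := by
  obtain ⟨c1, c2, c3, c4⟩ := aux_cards hn hS
  rw [H_decomp, Finset.card_union_of_disjoint, card_crossPairs, card_crossPairs, c1, c2, c3, c4]
  · generalize n / 2 - (S \ communityA n).card = l
    ring
  · rw [Finset.disjoint_left]
    intro a ha hb
    simp only [Finset.mem_inter, Finset.mem_sdiff, Finset.mem_compl] at ha hb
    tauto
  · rw [Finset.disjoint_left]
    intro a ha hb
    simp only [Finset.mem_inter, Finset.mem_sdiff, Finset.mem_compl] at ha hb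
    tauto
  · apply crossPairs_disjoint_aux
    intro u h1 h2
    simp only [Finset.mem_union, Finset.mem_inter, Finset.mem_sdiff, Finset.mem_compl] at h1 h2
    tauto

end Cards

end Aux

section Meas

variable {m : ℕ} (p q : Fin m → ℝ)

lemma colorMeasure_prob {r : Fin m → ℝ} (h : ∑ i, ENNReal.ofReal (r i) ≤ 1) :
    IsProbabilityMeasure (colorMeasure r) := by
  constructor
  rw [colorMeasure, Measure.add_apply, Measure.smul_apply, Measure.finset_sum_apply]
  simp only [Measure.smul_apply, smul_eq_mul, measure_univ, mul_one]
  exact tsub_add_cancel_of_le h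

lemma measurable_valFn : Measurable (valFn p q) := measurable_of_countable _

lemma map_finset_sum_measure {α β ι : Type*} [MeasurableSpace α] [MeasurableSpace β] {f : α → β}
    (hf : Measurable f) (s : Finset ι) (μ : ι → Measure α) :
    Measure.map f (∑ i ∈ s, μ i) = ∑ i ∈ s, Measure.map f (μ i) := by
  induction s using Finset.cons_induction with
  | empty => simp
  | cons i s hi ih => rw [Finset.sum_cons, Finset.sum_cons, Measure.map_add _ _ hf, ih]

lemma map_valFn_colorMeasure (r : Fin m → ℝ) :
    (colorMeasure r).map (valFn p q) =
      (1 - ∑ k, ENNReal.ofReal (r k)) • Measure.dirac 0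
        + ∑ k, ENNReal.ofReal (r k) • Measure.dirac (Real.log (p k / q k)) := by
  rw [colorMeasure, Measure.map_add _ _ (measurable_valFn p q), Measure.map_smul,
    Measure.map_dirac' (measurable_valFn p q), map_finset_sum_measure (measurable_valFn p q)]
  congr 1
  refine Finset.sum_congr rfl fun k _ => ?_
  rw [Measure.map_smul, Measure.map_dirac' (measurable_valFn p q), valFn_succ]

lemma Zdist_eq : Zdist p q = (colorMeasure q).map (valFn p q) := by
  rw [map_valFn_colorMeasure, Zdist]

lemma Wdist_eq : Wdist p q = (colorMeasure p).map (valFn p q) := by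
  rw [map_valFn_colorMeasure, Wdist]

lemma Zdist_prob (hq1 : ∑ i, ENNReal.ofReal (q i) ≤ 1) :
    IsProbabilityMeasure (Zdist p q) := by
  haveI := colorMeasure_prob hq1
  rw [Zdist_eq]
  exact Measure.isProbabilityMeasure_map (measurable_valFn p q).aemeasurable

lemma Wdist_prob (hp1 : ∑ i, ENNReal.ofReal (p i) ≤ 1) :
    IsProbabilityMeasure (Wdist p q) := by
  haveI := colorMeasure_prob hp1
  rw [Wdist_eq]
  exact Measure.isProbabilityMeasure_map (measurable_valFn p q).aemeasurable

end Meas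

section Main

variable {m : ℕ} (p q : Fin m → ℝ)

lemma measure_score_eq {n : ℕ} (hn : Even n)
    (hp1 : ∑ i, ENNReal.ofReal (p i) ≤ 1) (hq1 : ∑ i, ENNReal.ofReal (q i) ≤ 1)
    (S : Finset (Fin n)) (hS : S.card = n / 2) :
    sbmMeasure n m p q {ω | score p q ω (communityA n) ≤ score p q ω S} =
      diffProb p q (2 * (S \ communityA n).card * (n / 2 - (S \ communityA n).card)) := by
  classical
  haveI hcp : IsProbabilityMeasure (colorMeasure p) := colorMeasure_prob hp1
  haveI hcq : IsProbabilityMeasure (colorMeasure q) := colorMeasure_prob hq1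
  haveI hz : IsProbabilityMeasure (Zdist p q) := Zdist_prob p q hq1
  haveI hw : IsProbabilityMeasure (Wdist p q) := Wdist_prob p q hp1
  set A := communityA n with hAdef
  set N := 2 * (S \ A).card * (n / 2 - (S \ A).card) with hNdef
  set G := innerPairs S \ innerPairs A with hGdef
  set H := innerPairs A \ innerPairs S with hHdef
  have hGH : Disjoint G H := disjoint_sdiff_sdiff
  have hGcard : G.card = N := G_card hn hS
  have hHcard : H.card = N := H_card hn hS
  let eG : Fin N ≃ {e // e ∈ G} := (G.equivFin.trans (finCongr hGcard)).symm
  let eH : Fin N ≃ {e // e ∈ H} := (H.equivFin.trans (finCongr hHcard)).symm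
  let φ : Fin N → Sym2 (Fin n) := fun j => (eG j : Sym2 (Fin n))
  let ψ : Fin N → Sym2 (Fin n) := fun j => (eH j : Sym2 (Fin n))
  have hφG : ∀ j, φ j ∈ G := fun j => (eG j).2
  have hψH : ∀ j, ψ j ∈ H := fun j => (eH j).2
  have hφinj : Function.Injective φ := fun a b h => eG.injective (Subtype.ext h)
  have hψinj : Function.Injective ψ := fun a b h => eH.injective (Subtype.ext h)
  have hφψ : ∀ j j', φ j ≠ ψ j' :=
    fun j j' h => (Finset.disjoint_left.mp hGH (hφG j)) (h ▸ hψH j')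
  have hφside : ∀ j, ¬ sameSide n (φ j) := by
    intro j
    have h1 := hφG j
    rw [hGdef, Finset.mem_sdiff] at h1
    obtain ⟨h2, h3⟩ := h1
    rw [innerPairs, Finset.mem_filter] at h2 h3
    intro hs
    exact h3 ⟨Finset.mem_univ _, (h2.2).1, samePart_communityA.mpr hs⟩
  have hψside : ∀ j, sameSide n (ψ j) := by
    intro j
    have h1 := hψH j
    rw [hHdef, Finset.mem_sdiff] at h1
    have h2 := h1.1
    rw [innerPairs, Finset.mem_filter] at h2
    exact samePart_communityA.mp h2.2.2
  have hdiff : ∀ ω : Sym2 (Fin n) → Fin (m + 1), score p q ω S - score p q ω A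
      = ∑ j : Fin N, (valFn p q (ω (φ j)) - valFn p q (ω (ψ j))) := by
    intro ω
    rw [score_eq p q ω S, score_eq p q ω A]
    have e1 : ∑ e ∈ innerPairs S, valFn p q (ω e)
        = ∑ e ∈ innerPairs S ∩ innerPairs A, valFn p q (ω e)
          + ∑ e ∈ G, valFn p q (ω e) :=
      (Finset.sum_inter_add_sum_sdiff _ _ _).symm
    have e2 : ∑ e ∈ innerPairs A, valFn p q (ω e)
        = ∑ e ∈ innerPairs S ∩ innerPairs A, valFn p q (ω e)
          + ∑ e ∈ H, valFn p q (ω e) := by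
      rw [Finset.inter_comm]
      exact (Finset.sum_inter_add_sum_sdiff _ _ _).symm
    have e3 : ∑ e ∈ G, valFn p q (ω e) = ∑ j : Fin N, valFn p q (ω (φ j)) := by
      rw [← Finset.sum_coe_sort G (fun e => valFn p q (ω e))]
      exact (Equiv.sum_comp eG fun x => valFn p q (ω x)).symm
    have e4 : ∑ e ∈ H, valFn p q (ω e) = ∑ j : Fin N, valFn p q (ω (ψ j)) := by
      rw [← Finset.sum_coe_sort H (fun e => valFn p q (ω e))]
      exact (Equiv.sum_comp eH fun x => valFn p q (ω x)).symm
    rw [e1, e2, e3, e4, Finset.sum_sub_distrib]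
    ring
  let T : (Sym2 (Fin n) → Fin (m + 1)) → (Fin N → ℝ × ℝ) :=
    fun ω j => (valFn p q (ω (φ j)), valFn p q (ω (ψ j)))
  have hTmeas : Measurable T := measurable_of_countable _
  have hset : {ω | score p q ω A ≤ score p q ω S}
      = T ⁻¹' {f : Fin N → ℝ × ℝ | (0:ℝ) ≤ ∑ j, ((f j).1 - (f j).2)} := by
    ext ω
    simp only [Set.mem_setOf_eq, Set.mem_preimage]
    rw [← sub_nonneg, hdiff ω]
  have hAmeas : MeasurableSet {f : Fin N → ℝ × ℝ | (0:ℝ) ≤ ∑ j, ((f j).1 - (f j).2)} :=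
    measurableSet_le measurable_const (Finset.measurable_sum _ fun j _ =>
      (measurable_fst.comp (measurable_pi_apply j)).sub
        (measurable_snd.comp (measurable_pi_apply j)))
  have hmap : (sbmMeasure n m p q).map T
      = Measure.pi (fun _ : Fin N => (Zdist p q).prod (Wdist p q)) := by
    let T1 : (Sym2 (Fin n) → Fin (m + 1)) → (Fin N → Fin (m + 1) × Fin (m + 1)) :=
      fun ω j => (ω (φ j), ω (ψ j))
    let vp : Fin (m + 1) × Fin (m + 1) → ℝ × ℝ := fun c => (valFn p q c.1, valFn p q c.2)
    let T2 : (Fin N → Fin (m + 1) × Fin (m + 1)) → (Fin N → ℝ × ℝ) := fun g j => vp (g j)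
    have hT12 : T = T2 ∘ T1 := rfl
    have hmeas1 : Measurable T1 := measurable_of_countable _
    have hmeas2 : Measurable T2 := measurable_of_countable _
    haveI hsf : ∀ e : Sym2 (Fin n),
        SigmaFinite (if sameSide n e then colorMeasure p else colorMeasure q) := by
      intro e
      by_cases h : sameSide n e
      · rw [if_pos h]; infer_instance
      · rw [if_neg h]; infer_instance
    have h1 : (sbmMeasure n m p q).map T1
        = Measure.pi (fun _ : Fin N => (colorMeasure q).prod (colorMeasure p)) := by
      refine Measure.ext_of_singleton fun g => ?_
      rw [Measure.map_apply hmeas1 (measurableSet_singleton g)]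
      have hpre : T1 ⁻¹' {g} = Set.pi Set.univ
          (fun e => {c : Fin (m + 1) |
            (∀ j, φ j = e → c = (g j).1) ∧ (∀ j, ψ j = e → c = (g j).2)}) := by
        ext ω
        simp only [Set.mem_preimage, Set.mem_singleton_iff, funext_iff, Prod.ext_iff,
          Set.mem_pi, Set.mem_univ, true_implies, Set.mem_setOf_eq]
        constructor
        · intro h e
          constructor
          · rintro j rfl; exact (h j).1
          · rintro j rfl; exact (h j).2
        · intro h j
          exact ⟨(h (φ j)).1 j rfl, (h (ψ j)).2 j rfl⟩
      rw [hpre, sbmMeasure, Measure.pi_pi]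
      rw [show ({g} : Set (Fin N → Fin (m + 1) × Fin (m + 1)))
          = Set.pi Set.univ (fun j => {g j}) from (Set.univ_pi_singleton g).symm,
        Measure.pi_pi]
      have hrhs : ∀ j : Fin N, ((colorMeasure q).prod (colorMeasure p)) {g j}
          = colorMeasure q {(g j).1} * colorMeasure p {(g j).2} := by
        intro j
        rw [show ({g j} : Set (Fin (m + 1) × Fin (m + 1)))
            = {(g j).1} ×ˢ {(g j).2} by rw [Set.singleton_prod_singleton],
          Measure.prod_prod]
      rw [← Finset.prod_mul_prod_compl (G ∪ H)]
      have hout : ∀ e ∈ (G ∪ H)ᶜ, (if sameSide n e then colorMeasure p else colorMeasure q)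
          {c : Fin (m + 1) |
            (∀ j, φ j = e → c = (g j).1) ∧ (∀ j, ψ j = e → c = (g j).2)} = 1 := by
        intro e he
        rw [Finset.mem_compl, Finset.mem_union] at he
        push_neg at he
        have hC : {c : Fin (m + 1) |
            (∀ j, φ j = e → c = (g j).1) ∧ (∀ j, ψ j = e → c = (g j).2)} = Set.univ := by
          apply Set.eq_univ_of_forall
          intro c
          exact ⟨fun j hj => absurd (hj ▸ hφG j) he.1,
            fun j hj => absurd (hj ▸ hψH j) he.2⟩
        rw [hC]
        split_ifs <;> exact measure_univ
      rw [Finset.prod_congr rfl hout, Finset.prod_const_one, mul_one,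
        Finset.prod_union hGH]
      have hGpart : (∏ e ∈ G, (if sameSide n e then colorMeasure p else colorMeasure q)
          {c : Fin (m + 1) |
            (∀ j, φ j = e → c = (g j).1) ∧ (∀ j, ψ j = e → c = (g j).2)})
          = ∏ j : Fin N, colorMeasure q {(g j).1} := by
        rw [← Finset.prod_coe_sort G, ← Equiv.prod_comp eG]
        refine Finset.prod_congr rfl fun j _ => ?_
        have hφj : ((eG j : {e // e ∈ G}) : Sym2 (Fin n)) = φ j := rfl
        rw [hφj, if_neg (hφside j)]
        congr 1
        ext c
        simp only [Set.mem_setOf_eq, Set.mem_singleton_iff]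
        constructor
        · intro h; exact h.1 j rfl
        · intro h
          refine ⟨fun j' hj' => ?_, fun j' hj' => absurd hj' (hφψ j j').symm⟩
          · rw [hφinj hj']; exact h
      have hHpart : (∏ e ∈ H, (if sameSide n e then colorMeasure p else colorMeasure q)
          {c : Fin (m + 1) |
            (∀ j, φ j = e → c = (g j).1) ∧ (∀ j, ψ j = e → c = (g j).2)})
          = ∏ j : Fin N, colorMeasure p {(g j).2} := by
        rw [← Finset.prod_coe_sort H, ← Equiv.prod_comp eH]
        refine Finset.prod_congr rfl fun j _ => ?_
        have hψj : ((eH j : {e // e ∈ H}) : Sym2 (Fin n)) = ψ j := rfl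
        rw [hψj, if_pos (hψside j)]
        congr 1
        ext c
        simp only [Set.mem_setOf_eq, Set.mem_singleton_iff]
        constructor
        · intro h; exact h.2 j rfl
        · intro h
          refine ⟨fun j' hj' => absurd hj' (hφψ j' j), fun j' hj' => ?_⟩
          · rw [hψinj hj']; exact h
      rw [hGpart, hHpart, ← Finset.prod_mul_distrib]
      exact (Finset.prod_congr rfl fun j _ => (hrhs j)).symm
    have h2 : (Measure.pi (fun _ : Fin N => (colorMeasure q).prod (colorMeasure p))).map T2
        = Measure.pi (fun _ : Fin N => (Zdist p q).prod (Wdist p q)) := by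
      refine (Measure.pi_eq fun s hs => ?_).symm
      rw [Measure.map_apply hmeas2 (MeasurableSet.univ_pi hs)]
      have hpre2 : T2 ⁻¹' Set.pi Set.univ s = Set.pi Set.univ fun j => vp ⁻¹' s j := by
        ext gg
        simp only [Set.mem_preimage, Set.mem_pi, Set.mem_univ, true_implies]
        exact Iff.rfl
      rw [hpre2, Measure.pi_pi]
      have hvp : Measure.map vp ((colorMeasure q).prod (colorMeasure p))
          = (Zdist p q).prod (Wdist p q) := by
        have hvp' : vp = Prod.map (valFn p q) (valFn p q) := rfl
        rw [hvp', ← Measure.map_prod_map _ _ (measurable_valFn p q) (measurable_valFn p q),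
          ← Zdist_eq, ← Wdist_eq]
      refine Finset.prod_congr rfl fun j _ => ?_
      rw [← hvp, Measure.map_apply (measurable_of_countable _) (hs j)]
    rw [hT12, ← Measure.map_map hmeas2 hmeas1, h1, h2]
  rw [hset, ← Measure.map_apply hTmeas hAmeas, hmap, diffProb]

end Main

lemma card_partitions {n : ℕ} (hn : Even n) (k : ℕ) (hk : k ≤ n / 2) :
    ((Finset.univ : Finset (Finset (Fin n))).filter fun S =>
        S.card = n / 2 ∧ (S \ communityA n).card = k).card = ((n / 2).choose k) ^ 2 := by
  classical
  set A := communityA n with hAdef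
  have hA : A.card = n / 2 := card_communityA
  have hAc : Aᶜ.card = n / 2 := card_communityA_compl hn
  have hbij : ((Finset.univ : Finset (Finset (Fin n))).filter fun S =>
        S.card = n / 2 ∧ (S \ A).card = k).card
      = ((A.powersetCard (n / 2 - k)) ×ˢ (Aᶜ.powersetCard k)).card := by
    apply Finset.card_bij (fun S _ => (S ∩ A, S \ A))
    · intro S hS
      rw [Finset.mem_filter] at hS
      obtain ⟨-, h1, h2⟩ := hS
      have e1 := Finset.card_inter_add_card_sdiff S A
      rw [Finset.mem_product, Finset.mem_powersetCard, Finset.mem_powersetCard]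
      dsimp only
      refine ⟨⟨Finset.inter_subset_right, by omega⟩, ⟨?_, h2⟩⟩
      intro a ha
      rw [Finset.mem_compl]
      exact (Finset.mem_sdiff.mp ha).2
    · intro S1 h1 S2 h2 heq
      rw [Prod.ext_iff] at heq
      obtain ⟨e1, e2⟩ := heq
      dsimp only at e1 e2
      have hrec : ∀ S : Finset (Fin n), (S ∩ A) ∪ (S \ A) = S := by
        intro S; ext a
        simp only [Finset.mem_union, Finset.mem_inter, Finset.mem_sdiff]
        tauto
      rw [← hrec S1, ← hrec S2, e1, e2]
    · rintro ⟨P, Q⟩ hPQ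
      rw [Finset.mem_product, Finset.mem_powersetCard, Finset.mem_powersetCard] at hPQ
      obtain ⟨⟨hPA, hPcard⟩, hQA, hQcard⟩ := hPQ
      dsimp only at hPA hPcard hQA hQcard
      have hQA' : ∀ a ∈ Q, a ∉ A := fun a ha => Finset.mem_compl.mp (hQA ha)
      have hdisj : Disjoint P Q := by
        rw [Finset.disjoint_left]
        intro a haP haQ
        exact hQA' a haQ (hPA haP)
      have hint : (P ∪ Q) ∩ A = P := by
        ext a
        simp only [Finset.mem_inter, Finset.mem_union]
        constructor
        · rintro ⟨hP | hQ, hA2⟩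
          · exact hP
          · exact absurd hA2 (hQA' _ hQ)
        · intro hP
          exact ⟨Or.inl hP, hPA hP⟩
      have hsd : (P ∪ Q) \ A = Q := by
        ext a
        simp only [Finset.mem_sdiff, Finset.mem_union]
        constructor
        · rintro ⟨hP | hQ, hA2⟩
          · exact absurd (hPA hP) hA2
          · exact hQ
        · intro hQ
          exact ⟨Or.inr hQ, hQA' _ hQ⟩
      refine ⟨P ∪ Q, ?_, ?_⟩
      · rw [Finset.mem_filter]
        refine ⟨Finset.mem_univ _, ?_, ?_⟩
        · rw [Finset.card_union_of_disjoint hdisj, hPcard, hQcard]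
          omega
        · rw [hsd]
          exact hQcard
      · rw [hint, hsd]
  rw [hbij, Finset.card_product, Finset.card_powersetCard, Finset.card_powersetCard,
    hA, hAc, Nat.choose_symm hk, sq]


theorem union_bound (m : ℕ) (hm : 0 < m) (α β : Fin m → ℝ)
    (hα : ∀ i, 0 < α i) (hβ : ∀ i, 0 < β i) (hne : ∃ i, α i ≠ β i)
    (n : ℕ) (hn : Even n)
    (hp : ∑ i, α i * Real.log n / n ≤ 1) (hq : ∑ i, β i * Real.log n / n ≤ 1) :
    sbmMeasure n m (fun i => α i * Real.log n / n) (fun i => β i * Real.log n / n)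
        (failEvent n m (fun i => α i * Real.log n / n) (fun i => β i * Real.log n / n)) ≤
      ∑ k ∈ Finset.Icc 1 (n / 4),
        ((n / 2).choose k : ℝ≥0∞) ^ 2 *
          diffProb (fun i => α i * Real.log n / n) (fun i => β i * Real.log n / n)
            (2 * k * (n / 2 - k)) := by
  classical
  set p : Fin m → ℝ := fun i => α i * Real.log n / n with hpdef
  set q : Fin m → ℝ := fun i => β i * Real.log n / n with hqdef
  rcases Nat.eq_zero_or_pos n with h0 | hpos
  · subst h0
    have hempty : failEvent 0 m p q = ∅ := by
      ext ω
      simp only [failEvent, Set.mem_setOf_eq, Set.mem_empty_iff_false, iff_false, not_exists]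
      intro S h
      have : S = communityA 0 := Subsingleton.elim _ _
      exact h.2.1 this
    rw [hempty, measure_empty]
    exact zero_le
  have hlog : (0:ℝ) ≤ Real.log n := Real.log_natCast_nonneg n
  have hnpos : (0:ℝ) < n := by exact_mod_cast hpos
  have hp0 : ∀ i, 0 ≤ p i := fun i =>
    div_nonneg (mul_nonneg (hα i).le hlog) hnpos.le
  have hq0 : ∀ i, 0 ≤ q i := fun i =>
    div_nonneg (mul_nonneg (hβ i).le hlog) hnpos.le
  have hp1 : ∑ i, ENNReal.ofReal (p i) ≤ 1 := by
    rw [← ENNReal.ofReal_sum_of_nonneg fun i _ => hp0 i, ← ENNReal.ofReal_one]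
    exact ENNReal.ofReal_le_ofReal hp
  have hq1 : ∑ i, ENNReal.ofReal (q i) ≤ 1 := by
    rw [← ENNReal.ofReal_sum_of_nonneg fun i _ => hq0 i, ← ENNReal.ofReal_one]
    exact ENNReal.ofReal_le_ofReal hq
  set A := communityA n with hAdef
  have hA : A.card = n / 2 := card_communityA
  have hAc : Aᶜ.card = n / 2 := card_communityA_compl hn
  set part : ℕ → Finset (Finset (Fin n)) := fun k =>
    (Finset.univ : Finset (Finset (Fin n))).filter fun S =>
      S.card = n / 2 ∧ (S \ A).card = k with hpart
  have hcover : failEvent n m p q ⊆ ⋃ k ∈ Finset.Icc 1 (n / 4), ⋃ S ∈ part k,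
      {ω | score p q ω A ≤ score p q ω S} := by
    rintro ω ⟨S, hScard, hne1, hne2, hsc⟩
    have hk_le : (S \ A).card ≤ n / 2 :=
      hScard ▸ Finset.card_le_card Finset.sdiff_subset
    have hk1 : 1 ≤ (S \ A).card := by
      rcases Nat.eq_zero_or_pos (S \ A).card with h | h
      · exfalso
        apply hne1
        have hsub : S ⊆ A := by
          rw [← Finset.sdiff_eq_empty_iff_subset]
          exact Finset.card_eq_zero.mp h
        exact Finset.eq_of_subset_of_card_le hsub (by rw [hA, hScard])
      · exact h
    have hklt : (S \ A).card < n / 2 := by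
      rcases Nat.lt_or_ge (S \ A).card (n / 2) with h | h
      · exact h
      exfalso
      have heq : (S \ A).card = n / 2 := le_antisymm hk_le h
      have hsub : S \ A ⊆ Aᶜ := by
        intro a ha
        rw [Finset.mem_compl]
        exact (Finset.mem_sdiff.mp ha).2
      have : S \ A = Aᶜ :=
        Finset.eq_of_subset_of_card_le hsub (by rw [heq, hAc])
      have hsub2 : Aᶜ ⊆ S := by
        rw [← this]
        exact Finset.sdiff_subset
      exact hne2 (Finset.eq_of_subset_of_card_le hsub2 (by rw [hScard, hAc])).symm
    by_cases hcase : (S \ A).card ≤ n / 4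
    · have hmem : S ∈ part ((S \ A).card) :=
        Finset.mem_filter.mpr ⟨Finset.mem_univ _, hScard, rfl⟩
      simp only [Set.mem_iUnion]
      exact ⟨(S \ A).card, Finset.mem_Icc.mpr ⟨hk1, hcase⟩, S, hmem, hsc⟩
    · have hScc : Sᶜ.card = n / 2 := by
        rw [Finset.card_compl, Fintype.card_fin, hScard]
        obtain ⟨r, hr⟩ := hn
        omega
      have hAcS : Aᶜ ∩ S = S \ A := by
        ext a
        simp only [Finset.mem_inter, Finset.mem_compl, Finset.mem_sdiff]
        tauto
      have hkc : (Sᶜ \ A).card = n / 2 - (S \ A).card := by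
        have h1 : Sᶜ \ A = Aᶜ \ S := by
          ext a
          simp only [Finset.mem_sdiff, Finset.mem_compl]
          tauto
        have h2 := Finset.card_inter_add_card_sdiff Aᶜ S
        rw [h1]
        rw [hAcS] at h2
        omega
      have hn42 : n / 4 = n / 2 / 2 := by omega
      have hrange : n / 2 - (S \ A).card ∈ Finset.Icc 1 (n / 4) := by
        rw [Finset.mem_Icc]
        constructor
        · omega
        · rw [hn42] at hcase ⊢
          omega
      have hmem : Sᶜ ∈ part (n / 2 - (S \ A).card) :=
        Finset.mem_filter.mpr ⟨Finset.mem_univ _, hScc, hkc⟩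
      have hsc' : score p q ω A ≤ score p q ω Sᶜ := by
        rw [score_compl]
        exact hsc
      simp only [Set.mem_iUnion]
      exact ⟨n / 2 - (S \ A).card, hrange, Sᶜ, hmem, hsc'⟩
  refine le_trans (measure_mono hcover) ?_
  refine le_trans (measure_biUnion_finset_le _ _) ?_
  refine Finset.sum_le_sum fun k hk => ?_
  refine le_trans (measure_biUnion_finset_le _ _) ?_
  have hterm : ∀ S ∈ part k, sbmMeasure n m p q {ω | score p q ω A ≤ score p q ω S}
      = diffProb p q (2 * k * (n / 2 - k)) := by
    intro S hS
    rw [hpart, Finset.mem_filter] at hS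
    obtain ⟨-, h1, h2⟩ := hS
    rw [measure_score_eq p q hn hp1 hq1 S h1, h2]
  rw [Finset.sum_congr rfl hterm, Finset.sum_const, nsmul_eq_mul]
  apply le_of_eq
  congr 1
  rw [hpart]
  rw [card_partitions hn k ?hk2]
  · push_cast
    ring
  case hk2 =>
    rw [Finset.mem_Icc] at hk
    omega
end

section
/- (Cramér's theorem, upper bound) Let X, X_1, X_2, … be i.i.d. real-valued random variables with finite support, and let I(x) = sup_{θ∈ℝ} (θx − log E[e^{θX}]). Then for every nonempty closed set F ⊆ ℝ and every positive integer n, Pr( (1/n) ∑_{i=1}^n X_i ∈ F ) ≤ 2 exp( −n · inf_{x∈F} I(x) ). -/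
open MeasureTheory Finset Filter
open scoped Classical ENNReal

open ProbabilityTheory Real
open scoped Topology

section CramerAux

variable {μ : Measure ℝ} [IsProbabilityMeasure μ]

lemma myIntegrable (hfin : ∃ s : Finset ℝ, μ (↑s : Set ℝ)ᶜ = 0)
    (f : ℝ → ℝ) (hf : Measurable f) : Integrable f μ := by
  obtain ⟨s, hs⟩ := hfin
  have hae : ∀ᵐ x ∂μ, x ∈ (↑s : Set ℝ) := by
    rw [ae_iff]
    exact hs
  refine Integrable.mono' (integrable_const (∑ y ∈ s, |f y|)) hf.aestronglyMeasurable ?_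
  filter_upwards [hae] with x hx
  rw [Real.norm_eq_abs]
  exact Finset.single_le_sum (fun y _ => abs_nonneg (f y)) hx

lemma myMapEval (n : ℕ) (i : Fin n) :
    (Measure.pi (fun _ : Fin n => μ)).map (Function.eval i) = μ := by
  ext t ht
  rw [Measure.map_apply (measurable_pi_apply i) ht, Set.eval_preimage,
    Measure.pi_pi]
  rw [Finset.prod_eq_single i (fun j _ hj => by simp [Function.update_of_ne hj])
    (by simp)]
  simp

lemma myIndep (n : ℕ) :
    iIndepFun
      (fun (i : Fin n) (x : Fin n → ℝ) => x i) (Measure.pi fun _ => μ) := by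
  rw [iIndepFun_iff_measure_inter_preimage_eq_mul]
  intro S sets hsets
  have h1 : (⋂ i ∈ S, (fun (x : Fin n → ℝ) => x i) ⁻¹' sets i) =
      Set.pi Set.univ (fun i => if i ∈ S then sets i else Set.univ) := by
    ext x
    simp only [Set.mem_iInter, Set.mem_preimage, Set.mem_pi, Set.mem_univ, true_imp_iff]
    constructor
    · intro h i; split_ifs with hi
      · exact h i hi
      · trivial
    · intro h i hi; have := h i; rwa [if_pos hi] at this
  rw [h1, Measure.pi_pi]
  have h2 : ∏ i : Fin n, μ (if i ∈ S then sets i else Set.univ) = ∏ i ∈ S, μ (sets i) := by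
    simp only [apply_ite μ, measure_univ]
    rw [Finset.prod_ite_mem Finset.univ S (fun i => μ (sets i)), Finset.univ_inter]
  rw [h2]
  refine Finset.prod_congr rfl fun i hi => ?_
  have h3 := Measure.map_apply (μ := Measure.pi fun _ : Fin n => μ)
    (measurable_pi_apply i) (hsets i hi)
  rw [myMapEval] at h3
  exact h3

lemma myCgf (n : ℕ) (i : Fin n) (θ : ℝ) :
    cgf (fun x : Fin n → ℝ => x i) (Measure.pi fun _ => μ) θ =
      Real.log (∫ y, Real.exp (θ * y) ∂μ) := by
  unfold cgf mgf
  congr 1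
  have h := integral_map (μ := Measure.pi fun _ : Fin n => μ) (φ := Function.eval i)
    (measurable_pi_apply i).aemeasurable
    (f := fun y : ℝ => Real.exp (θ * y))
    (Real.continuous_exp.comp (continuous_const.mul continuous_id)).aestronglyMeasurable
  rw [myMapEval] at h
  exact h.symm

lemma myJensen (hfin : ∃ s : Finset ℝ, μ (↑s : Set ℝ)ᶜ = 0) (θ : ℝ) :
    θ * (∫ y, y ∂μ) ≤ Real.log (∫ y, Real.exp (θ * y) ∂μ) := by
  have hint1 : Integrable (fun y : ℝ => θ * y) μ :=
    myIntegrable hfin _ (measurable_const.mul measurable_id)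
  have hint2 : Integrable (fun y : ℝ => Real.exp (θ * y)) μ :=
    myIntegrable hfin _ (measurable_const.mul measurable_id).exp
  have h1 : Real.exp (∫ y, θ * y ∂μ) ≤ ∫ y, Real.exp (θ * y) ∂μ := by
    have := convexOn_exp.map_integral_le (μ := μ) (f := fun y : ℝ => θ * y)
      Real.continuous_exp.continuousOn isClosed_univ
      (Filter.Eventually.of_forall fun x => Set.mem_univ _) hint1 hint2
    exact this
  calc θ * ∫ y, y ∂μ = Real.log (Real.exp (θ * ∫ y, y ∂μ)) := (Real.log_exp _).symm
    _ ≤ Real.log (∫ y, Real.exp (θ * y) ∂μ) := by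
        apply Real.log_le_log (Real.exp_pos _)
        rw [integral_const_mul] at h1
        exact h1

lemma myTailUpper (hfin : ∃ s : Finset ℝ, μ (↑s : Set ℝ)ᶜ = 0) (n : ℕ) (θ b c' : ℝ)
    (hθ : 0 ≤ θ) (hcb : c' ≤ θ * b - Real.log (∫ y, Real.exp (θ * y) ∂μ)) :
    Measure.pi (fun _ : Fin n => μ) {x | (n : ℝ) * b ≤ ∑ i, x i} ≤
      ENNReal.ofReal (Real.exp (-(n : ℝ) * c')) := by
  set P := Measure.pi (fun _ : Fin n => μ) with hP
  set Λ := Real.log (∫ y, Real.exp (θ * y) ∂μ) with hΛ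
  have hmeas : ∀ i : Fin n, Measurable (fun x : Fin n → ℝ => x i) :=
    fun i => measurable_pi_apply i
  have hint : ∀ i : Fin n, Integrable (fun x : Fin n → ℝ => Real.exp (θ * x i)) P := by
    intro i
    have h0 : Integrable (fun y : ℝ => Real.exp (θ * y)) μ :=
      myIntegrable hfin _ (measurable_const.mul measurable_id).exp
    rw [← myMapEval (μ := μ) n i] at h0
    exact (integrable_map_measure h0.aestronglyMeasurable
      (measurable_pi_apply i).aemeasurable).mp h0
  have hintsum : Integrable
      (fun x => Real.exp (θ * (∑ i : Fin n, fun y : Fin n → ℝ => y i) x)) P :=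
    (myIndep n).integrable_exp_mul_sum hmeas (fun i _ => hint i)
  have hcgf : cgf (∑ i : Fin n, fun y : Fin n → ℝ => y i) P θ = n * Λ := by
    rw [(myIndep n).cgf_sum hmeas (fun i _ => hint i)]
    simp [myCgf, ← hΛ, Finset.sum_const, nsmul_eq_mul]
  have hch := measure_ge_le_exp_cgf (μ := P)
    (X := ∑ i : Fin n, fun y : Fin n → ℝ => y i) ((n : ℝ) * b) hθ hintsum
  rw [hcgf] at hch
  have hset : {x : Fin n → ℝ | (n : ℝ) * b ≤ ∑ i, x i} =
      {x | (n : ℝ) * b ≤ (∑ i : Fin n, fun y : Fin n → ℝ => y i) x} := by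
    ext x; simp [Finset.sum_apply]
  have hexp : -θ * ((n : ℝ) * b) + n * Λ ≤ -(n : ℝ) * c' := by nlinarith [Nat.cast_nonneg (α := ℝ) n]
  rw [hset, ← ENNReal.ofReal_toReal (measure_ne_top P _)]
  exact ENNReal.ofReal_le_ofReal (hch.trans (Real.exp_le_exp.mpr hexp))

lemma myTailLower (hfin : ∃ s : Finset ℝ, μ (↑s : Set ℝ)ᶜ = 0) (n : ℕ) (θ a c' : ℝ)
    (hθ : θ ≤ 0) (hcb : c' ≤ θ * a - Real.log (∫ y, Real.exp (θ * y) ∂μ)) :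
    Measure.pi (fun _ : Fin n => μ) {x | ∑ i, x i ≤ (n : ℝ) * a} ≤
      ENNReal.ofReal (Real.exp (-(n : ℝ) * c')) := by
  set P := Measure.pi (fun _ : Fin n => μ) with hP
  set Λ := Real.log (∫ y, Real.exp (θ * y) ∂μ) with hΛ
  have hmeas : ∀ i : Fin n, Measurable (fun x : Fin n → ℝ => x i) :=
    fun i => measurable_pi_apply i
  have hint : ∀ i : Fin n, Integrable (fun x : Fin n → ℝ => Real.exp (θ * x i)) P := by
    intro i
    have h0 : Integrable (fun y : ℝ => Real.exp (θ * y)) μ :=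
      myIntegrable hfin _ (measurable_const.mul measurable_id).exp
    rw [← myMapEval (μ := μ) n i] at h0
    exact (integrable_map_measure h0.aestronglyMeasurable
      (measurable_pi_apply i).aemeasurable).mp h0
  have hintsum : Integrable
      (fun x => Real.exp (θ * (∑ i : Fin n, fun y : Fin n → ℝ => y i) x)) P :=
    (myIndep n).integrable_exp_mul_sum hmeas (fun i _ => hint i)
  have hcgf : cgf (∑ i : Fin n, fun y : Fin n → ℝ => y i) P θ = n * Λ := by
    rw [(myIndep n).cgf_sum hmeas (fun i _ => hint i)]
    simp [myCgf, ← hΛ, Finset.sum_const, nsmul_eq_mul]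
  have hch := measure_le_le_exp_cgf (μ := P)
    (X := ∑ i : Fin n, fun y : Fin n → ℝ => y i) ((n : ℝ) * a) hθ hintsum
  rw [hcgf] at hch
  have hset : {x : Fin n → ℝ | ∑ i, x i ≤ (n : ℝ) * a} =
      {x | (∑ i : Fin n, fun y : Fin n → ℝ => y i) x ≤ (n : ℝ) * a} := by
    ext x; simp [Finset.sum_apply]
  have hexp : -θ * ((n : ℝ) * a) + n * Λ ≤ -(n : ℝ) * c' := by nlinarith [Nat.cast_nonneg (α := ℝ) n]
  rw [hset, ← ENNReal.ofReal_toReal (measure_ne_top P _)]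
  exact ENNReal.ofReal_le_ofReal (hch.trans (Real.exp_le_exp.mpr hexp))

end CramerAux

theorem cramer_upper (μ : Measure ℝ) [IsProbabilityMeasure μ]
    (hfin : ∃ s : Finset ℝ, μ (↑s : Set ℝ)ᶜ = 0)
    (I : ℝ → ℝ≥0∞)
    (hI : ∀ x, I x =
      ⨆ θ : ℝ, ENNReal.ofReal (θ * x - Real.log (∫ y, Real.exp (θ * y) ∂μ)))
    (F : Set ℝ) (hF : IsClosed F) (hFne : F.Nonempty)
    (n : ℕ) (hn : 0 < n) (c : ℝ) (hc : ENNReal.ofReal c ≤ ⨅ x ∈ F, I x) :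
    Measure.pi (fun _ : Fin n => μ) {x | (∑ i, x i) / n ∈ F} ≤
      2 * ENNReal.ofReal (Real.exp (-(n : ℝ) * c)) := by
  set P := Measure.pi (fun _ : Fin n => μ) with hP
  haveI : IsProbabilityMeasure P := by rw [hP]; infer_instance
  rcases le_or_gt c 0 with hc0 | hc0
  · -- trivial case
    have h1 : (1 : ℝ) ≤ Real.exp (-(n : ℝ) * c) := by
      rw [← Real.exp_zero]
      refine Real.exp_le_exp.mpr ?_
      have : (0:ℝ) ≤ (n:ℝ) := Nat.cast_nonneg n
      nlinarith
    calc P {x | (∑ i, x i) / n ∈ F} ≤ 1 := prob_le_one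
      _ ≤ ENNReal.ofReal (Real.exp (-(n : ℝ) * c)) := by
          rw [← ENNReal.ofReal_one]; exact ENNReal.ofReal_le_ofReal h1
      _ ≤ 2 * ENNReal.ofReal (Real.exp (-(n : ℝ) * c)) :=
          le_mul_of_one_le_left bot_le one_le_two
  · -- main case
    set m := ∫ y, y ∂μ with hm
    have hmF : m ∉ F := by
      intro hmem
      have hIm : I m = 0 := by
        rw [hI]
        refine le_antisymm (iSup_le fun θ => ?_) bot_le
        have := myJensen hfin θ
        exact le_of_eq (ENNReal.ofReal_eq_zero.mpr (by linarith))
      have h2 : ENNReal.ofReal c ≤ 0 := hc.trans (by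
        refine le_trans (iInf₂_le m hmem) ?_
        rw [hIm])
      simp only [nonpos_iff_eq_zero, ENNReal.ofReal_eq_zero] at h2
      linarith
    have hexθ : ∀ c' > 0, ∀ x ∈ F, c' < c →
        ∃ θ : ℝ, c' < θ * x - Real.log (∫ y, Real.exp (θ * y) ∂μ) := by
      intro c' hc'0 x hxF hc'c
      have h1 : ENNReal.ofReal c' < I x :=
        lt_of_lt_of_le ((ENNReal.ofReal_lt_ofReal_iff hc0).mpr hc'c)
          (hc.trans (iInf₂_le x hxF))
      rw [hI, lt_iSup_iff] at h1
      obtain ⟨θ, hθ⟩ := h1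
      refine ⟨θ, ?_⟩
      by_contra h
      push_neg at h
      exact absurd hθ (not_lt.mpr (ENNReal.ofReal_le_ofReal h))
    have key : ∀ c', 0 < c' → c' < c →
        P {x | (∑ i, x i) / n ∈ F} ≤ 2 * ENNReal.ofReal (Real.exp (-(n : ℝ) * c')) := by
      intro c' hc'0 hc'c
      set A := F ∩ Set.Iic m with hA
      set B := F ∩ Set.Ici m with hB
      have hBbound : P {x | (∑ i, x i) / n ∈ B} ≤
          ENNReal.ofReal (Real.exp (-(n : ℝ) * c')) := by
        rcases B.eq_empty_or_nonempty with hBe | hBne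
        · rw [hBe]; simp
        · set b := sInf B with hb
          have hBc : IsClosed B := hF.inter isClosed_Ici
          have hBbdd : BddBelow B := ⟨m, fun x hx => hx.2⟩
          have hbB : b ∈ B := hBc.csInf_mem hBne hBbdd
          have hbm : m ≤ b := hbB.2
          obtain ⟨θ, hθ⟩ := hexθ c' hc'0 b hbB.1 hc'c
          have hθ0 : 0 ≤ θ := by
            by_contra h
            push_neg at h
            have hj := myJensen hfin θ
            nlinarith
          refine le_trans (measure_mono ?_) (myTailUpper hfin n θ b c' hθ0 hθ.le)
          intro x hx
          simp only [Set.mem_setOf_eq] at hx ⊢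
          have h2 : b ≤ (∑ i, x i) / n := csInf_le hBbdd hx
          have hn' : (0 : ℝ) < n := Nat.cast_pos.mpr hn
          calc (n : ℝ) * b ≤ n * ((∑ i, x i) / n) := by
                exact mul_le_mul_of_nonneg_left h2 hn'.le
            _ = ∑ i, x i := by field_simp
      have hAbound : P {x | (∑ i, x i) / n ∈ A} ≤
          ENNReal.ofReal (Real.exp (-(n : ℝ) * c')) := by
        rcases A.eq_empty_or_nonempty with hAe | hAne
        · rw [hAe]; simp
        · set a := sSup A with ha
          have hAc : IsClosed A := hF.inter isClosed_Iic
          have hAbdd : BddAbove A := ⟨m, fun x hx => hx.2⟩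
          have haA : a ∈ A := hAc.csSup_mem hAne hAbdd
          have ham : a ≤ m := haA.2
          obtain ⟨θ, hθ⟩ := hexθ c' hc'0 a haA.1 hc'c
          have hθ0 : θ ≤ 0 := by
            by_contra h
            push_neg at h
            have hj := myJensen hfin θ
            nlinarith
          refine le_trans (measure_mono ?_) (myTailLower hfin n θ a c' hθ0 hθ.le)
          intro x hx
          simp only [Set.mem_setOf_eq] at hx ⊢
          have h2 : (∑ i, x i) / n ≤ a := le_csSup hAbdd hx
          have hn' : (0 : ℝ) < n := Nat.cast_pos.mpr hn
          calc ∑ i, x i = n * ((∑ i, x i) / n) := by field_simp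
            _ ≤ (n : ℝ) * a := mul_le_mul_of_nonneg_left h2 hn'.le
      calc P {x | (∑ i, x i) / n ∈ F}
          ≤ P ({x | (∑ i, x i) / n ∈ A} ∪ {x | (∑ i, x i) / n ∈ B}) := by
            refine measure_mono fun x hx => ?_
            simp only [Set.mem_setOf_eq, Set.mem_union] at hx ⊢
            rcases le_total ((∑ i, x i) / n) m with h | h
            · exact Or.inl ⟨hx, h⟩
            · exact Or.inr ⟨hx, h⟩
        _ ≤ P {x | (∑ i, x i) / n ∈ A} + P {x | (∑ i, x i) / n ∈ B} :=
            measure_union_le _ _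
        _ ≤ ENNReal.ofReal (Real.exp (-(n : ℝ) * c')) +
            ENNReal.ofReal (Real.exp (-(n : ℝ) * c')) := add_le_add hAbound hBbound
        _ = 2 * ENNReal.ofReal (Real.exp (-(n : ℝ) * c')) := (two_mul _).symm
    -- limit argument
    haveI : (𝓝[Set.Ioo 0 c] c).NeBot := right_nhdsWithin_Ioo_neBot hc0
    have hcont : Tendsto (fun c' : ℝ => 2 * ENNReal.ofReal (Real.exp (-(n : ℝ) * c')))
        (𝓝[Set.Ioo 0 c] c) (𝓝 (2 * ENNReal.ofReal (Real.exp (-(n : ℝ) * c)))) := by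
      refine Tendsto.mono_left (Continuous.tendsto ?_ c) nhdsWithin_le_nhds
      exact (ENNReal.continuous_const_mul (by norm_num)).comp
        (ENNReal.continuous_ofReal.comp (Real.continuous_exp.comp (continuous_const.mul
          continuous_id)))
    refine ge_of_tendsto hcont ?_
    filter_upwards [self_mem_nhdsWithin] with c' hc'
    exact key c' hc'.1 hc'.2
end

section
/- (Cramér's theorem, lower bound) Let Y, Y_1, Y_2, … be i.i.d. real-valued random variables with finite support such that Y takes some positive value and some negative value each with positive probability. Let Λ(λ) = log E[e^{λY}], let η be a point where Λ attains its (finite) minimum, let X̃ be the tilted random variable with law proportional to e^{ηy} times the law of Y, and let σ² be the variance of X̃. Then for every ε > 0 and every positive integer n, Pr( (1/n) ∑_{i=1}^n Y_i ∈ (−ε, ε) ) ≥ exp[ −n ( −Λ(η) + ε|η| ) ] · ( 1 − σ²/(n ε²) ). -/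
open MeasureTheory ProbabilityTheory Finset Filter
open scoped Classical ENNReal

lemma cl_ae_mem {μ : Measure ℝ} {s : Finset ℝ} (hs : μ (↑s : Set ℝ)ᶜ = 0) :
    ∀ᵐ x ∂μ, x ∈ (s : Set ℝ) := by
  rw [ae_iff]
  exact hs

lemma cl_integrable {μ : Measure ℝ} [IsFiniteMeasure μ] {s : Finset ℝ}
    (hs : μ (↑s : Set ℝ)ᶜ = 0) {f : ℝ → ℝ} (hf : Measurable f) : Integrable f μ := by
  refine memLp_one_iff_integrable.mp (MemLp.of_bound hf.aestronglyMeasurable (∑ y ∈ s, |f y|) ?_)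
  filter_upwards [cl_ae_mem hs] with x hx
  rw [Real.norm_eq_abs]
  exact Finset.single_le_sum (fun y _ => abs_nonneg (f y)) hx

lemma cl_integral_eq_sum {μ : Measure ℝ} [IsFiniteMeasure μ] {s : Finset ℝ}
    (hs : μ (↑s : Set ℝ)ᶜ = 0) {f : ℝ → ℝ} (hf : Measurable f) :
    ∫ y, f y ∂μ = ∑ y ∈ s, (μ {y}).toReal * f y := by
  have h1 : μ.restrict ↑s = μ := Measure.restrict_eq_self_of_ae_mem (cl_ae_mem hs)
  have h2 := integral_finset (μ := μ) (f := f) s ((cl_integrable hs hf).integrableOn)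
  rw [h1] at h2
  rw [h2]
  simp [smul_eq_mul, Measure.real]

lemma cl_integral_pi_prod {n : ℕ} (ν : Measure ℝ) [SigmaFinite ν] (f : Fin n → ℝ → ℝ) :
    ∫ x : Fin n → ℝ, ∏ i, f i (x i) ∂(Measure.pi fun _ => ν) = ∏ i, ∫ y, f i y ∂ν :=
  MeasureTheory.integral_fintype_prod_eq_prod (𝕜 := ℝ) (E := fun _ => ℝ) f (μ := fun _ => ν)

lemma cl_measure_coe_finset {α : Type*} [MeasurableSpace α] [MeasurableSingletonClass α]
    (ρ : Measure α) (W : Finset α) : ρ ↑W = ∑ x ∈ W, ρ {x} := by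
  have h : (↑W : Set α) = ⋃ x ∈ W, {x} := by ext x; simp
  rw [h, measure_biUnion_finset ?_ (fun _ _ => measurableSet_singleton _)]
  intro x _ y _ hxy
  simp [Function.onFun, Set.disjoint_singleton, hxy]

set_option maxHeartbeats 1000000 in
theorem cramer_lower (μ : Measure ℝ) [IsProbabilityMeasure μ]
    (hfin : ∃ s : Finset ℝ, μ (↑s : Set ℝ)ᶜ = 0)
    (hpos : 0 < μ (Set.Ioi 0)) (hneg : 0 < μ (Set.Iio 0))
    (Λ : ℝ → ℝ) (hΛ : ∀ t, Λ t = Real.log (∫ y, Real.exp (t * y) ∂μ))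
    (η : ℝ) (hη : ∀ t, Λ η ≤ Λ t)
    (σ2 : ℝ)
    (hσ : σ2 = variance id (μ.withDensity fun y =>
      ENNReal.ofReal (Real.exp (η * y) / ∫ z, Real.exp (η * z) ∂μ)))
    (ε : ℝ) (hε : 0 < ε) (n : ℕ) (hn : 0 < n) :
    ENNReal.ofReal (Real.exp (-(n : ℝ) * (-Λ η + ε * |η|)) *
        (1 - σ2 / (n * ε ^ 2))) ≤
      Measure.pi (fun _ : Fin n => μ) {x | (∑ i, x i) / n ∈ Set.Ioo (-ε) ε} := by
  obtain ⟨s, hs⟩ := hfin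
  set w : ℝ → ℝ := fun y => (μ {y}).toReal with hw
  have hw0 : ∀ y, 0 ≤ w y := fun y => ENNReal.toReal_nonneg
  set F : ℝ → ℝ := fun t => ∑ y ∈ s, w y * Real.exp (t * y) with hF
  have hFint : ∀ t, ∫ y, Real.exp (t * y) ∂μ = F t := fun t =>
    cl_integral_eq_sum hs ((measurable_id.const_mul t).exp)
  -- some w is positive
  have hsum1 : ∑ y ∈ s, w y = 1 := by
    have := cl_integral_eq_sum hs (f := fun _ => (1 : ℝ)) measurable_const
    simpa using this.symm
  have hFpos : ∀ t, 0 < F t := by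
    intro t
    have hex : ∃ y ∈ s, 0 < w y := by
      by_contra h
      push_neg at h
      have : (∑ y ∈ s, w y) ≤ 0 := Finset.sum_nonpos h
      linarith [hsum1 ▸ this]
    obtain ⟨y0, hy0s, hy0⟩ := hex
    refine Finset.sum_pos' (fun y _ => mul_nonneg (hw0 y) (Real.exp_pos _).le) ?_
    exact ⟨y0, hy0s, mul_pos hy0 (Real.exp_pos _)⟩
  set G : ℝ → ℝ := fun t => ∑ y ∈ s, w y * (Real.exp (t * y) * y) with hG
  have hFd : ∀ t, HasDerivAt F (G t) t := by
    intro t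
    apply HasDerivAt.fun_sum
    intro y _
    exact ((hasDerivAt_mul_const y).exp.const_mul (w y))
  have hΛeq : Λ = fun t => Real.log (F t) := by
    funext t; rw [hΛ, hFint]
  have hG0 : G η = 0 := by
    have hloc : IsLocalMin Λ η := Filter.Eventually.of_forall hη
    have hd : HasDerivAt Λ (G η / F η) η := by
      rw [hΛeq]
      exact (hFd η).log (hFpos η).ne'
    have := hloc.hasDerivAt_eq_zero hd
    rcases div_eq_zero_iff.mp this with h | h
    · exact h
    · exact absurd h (hFpos η).ne'
  set M : ℝ := F η with hM
  have hMpos : 0 < M := hFpos η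
  -- the tilted measure
  set ν : Measure ℝ := μ.tilted (fun y => η * y) with hν
  have hexpint : Integrable (fun y => Real.exp (η * y)) μ :=
    cl_integrable hs ((measurable_id.const_mul η).exp)
  haveI : NeZero μ := ⟨IsProbabilityMeasure.ne_zero μ⟩
  haveI hνprob : IsProbabilityMeasure ν := isProbabilityMeasure_tilted hexpint
  have hσ' : σ2 = variance id ν := hσ
  have hνs : ν (↑s : Set ℝ)ᶜ = 0 := tilted_absolutelyContinuous μ _ hs
  have hν_single : ∀ y : ℝ, ν {y} = ENNReal.ofReal (Real.exp (η * y) / M) * μ {y} := by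
    intro y
    rw [hν, tilted_apply' _ _ (measurableSet_singleton y), lintegral_singleton,
      hFint η]
  have hw' : ∀ y : ℝ, (ν {y}).toReal = Real.exp (η * y) / M * w y := by
    intro y
    rw [hν_single, ENNReal.toReal_mul, ENNReal.toReal_ofReal
      (div_nonneg (Real.exp_pos _).le hMpos.le)]
  have hνint : ∀ {f : ℝ → ℝ}, Measurable f →
      ∫ y, f y ∂ν = ∑ y ∈ s, (Real.exp (η * y) / M * w y) * f y := by
    intro f hf
    rw [cl_integral_eq_sum hνs hf]
    exact Finset.sum_congr rfl fun y _ => by rw [hw']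
  have hm : ∫ y, y ∂ν = 0 := by
    rw [hνint (f := fun y => y) measurable_id]
    have : ∑ y ∈ s, (Real.exp (η * y) / M * w y) * y = G η / M := by
      rw [hG, Finset.sum_div]
      exact Finset.sum_congr rfl fun y _ => by field_simp
    rw [this, hG0, zero_div]
  set q : ℝ := ∫ y, y ^ 2 ∂ν with hq
  have hmemid : MemLp id 2 ν := by
    refine MemLp.of_bound aestronglyMeasurable_id (∑ y ∈ s, |y|) ?_
    filter_upwards [cl_ae_mem hνs] with x hx
    rw [Real.norm_eq_abs]
    exact Finset.single_le_sum (fun y _ => abs_nonneg y) hx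
  have hσq : σ2 = q := by
    rw [hσ', variance_eq_sub hmemid]
    have h1 : (∫ y, (id ^ 2) y ∂ν) = q := by
      rw [hq]; congr 1
    have h2 : (∫ y, id y ∂ν) = 0 := hm
    rw [h1, h2]
    ring
  have hq0 : 0 ≤ q := hσq ▸ (hσ' ▸ variance_nonneg id ν)
  -- the product measure
  set π : Measure (Fin n → ℝ) := Measure.pi (fun _ : Fin n => ν) with hπ
  haveI : IsProbabilityMeasure π := by rw [hπ]; infer_instance
  set S : (Fin n → ℝ) → ℝ := fun x => ∑ i, x i with hS
  have hSmeas : Measurable S := Finset.measurable_sum univ (fun i _ => measurable_pi_apply i)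
  set B : ℝ := ∑ y ∈ s, |y| with hB
  have hπae : ∀ᵐ x ∂π, ∀ i, x i ∈ (s : Set ℝ) := by
    rw [ae_all_iff]
    intro i
    rw [ae_iff]
    have : {x : Fin n → ℝ | ¬ x i ∈ (s : Set ℝ)} = Function.eval i ⁻¹' (↑s : Set ℝ)ᶜ := rfl
    rw [this, hπ]
    exact Measure.pi_eval_preimage_null (μ := fun _ : Fin n => ν) hνs
  have habs : ∀ (x : Fin n → ℝ), (∀ i, x i ∈ (s : Set ℝ)) → ∀ i, |x i| ≤ B := by
    intro x hx i
    exact Finset.single_le_sum (fun y _ => abs_nonneg y) (hx i)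
  have hmemS : MemLp S 2 π := by
    refine MemLp.of_bound hSmeas.aestronglyMeasurable ((n : ℝ) * B) ?_
    filter_upwards [hπae] with x hx
    rw [Real.norm_eq_abs, hS]
    calc |∑ i, x i| ≤ ∑ i, |x i| := Finset.abs_sum_le_sum_abs _ _
      _ ≤ ∑ _i : Fin n, B := Finset.sum_le_sum (fun i _ => habs x hx i)
      _ = (n : ℝ) * B := by simp [mul_comm]
  have hmemcoord : ∀ i : Fin n, MemLp (fun x : Fin n → ℝ => x i) 2 π := by
    intro i
    refine MemLp.of_bound (measurable_pi_apply i).aestronglyMeasurable B ?_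
    filter_upwards [hπae] with x hx
    rw [Real.norm_eq_abs]
    exact habs x hx i
  have hmemprod : ∀ i j : Fin n, MemLp (fun x : Fin n → ℝ => x i * x j) 2 π := by
    intro i j
    refine MemLp.of_bound ((measurable_pi_apply i).mul (measurable_pi_apply j)).aestronglyMeasurable
      (B * B) ?_
    filter_upwards [hπae] with x hx
    rw [Real.norm_eq_abs, abs_mul]
    exact mul_le_mul (habs x hx i) (habs x hx j) (abs_nonneg _) ((abs_nonneg (x i)).trans (habs x hx i))
  -- coordinate integrals
  have hEi : ∀ i : Fin n, ∫ x, x i ∂π = 0 := by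
    intro i
    have h1 : ∀ x : Fin n → ℝ, x i = ∏ j, (if j = i then x j else 1) := by
      intro x; rw [Finset.prod_ite_eq' univ i (fun j => x j)]; simp
    calc ∫ x, x i ∂π = ∫ x, ∏ j, (if j = i then x j else 1) ∂π := by
          congr 1; funext x; exact h1 x
      _ = ∏ j, ∫ y, (if j = i then y else 1 : ℝ) ∂ν := by
          rw [hπ]; exact cl_integral_pi_prod ν (fun j y => if j = i then y else 1)
      _ = ∏ j, (if j = i then (0:ℝ) else 1) := by
          refine Finset.prod_congr rfl fun j _ => ?_
          by_cases hji : j = i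
          · simp only [if_pos hji]
            exact hm
          · simp [hji]
      _ = 0 := by rw [Finset.prod_ite_eq' univ i (fun _ => (0:ℝ))]; simp
  have hEij : ∀ i j : Fin n, i ≠ j → ∫ x, x i * x j ∂π = 0 := by
    intro i j hij
    have h1 : ∀ x : Fin n → ℝ, x i * x j
        = ∏ k, ((if k = i then x k else 1) * (if k = j then x k else 1)) := by
      intro x
      rw [Finset.prod_mul_distrib, Finset.prod_ite_eq' univ i (fun k => x k),
        Finset.prod_ite_eq' univ j (fun k => x k)]
      simp
    calc ∫ x, x i * x j ∂π
        = ∫ x, ∏ k, ((if k = i then x k else 1) * (if k = j then x k else 1)) ∂π := by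
          congr 1; funext x; exact h1 x
      _ = ∏ k, ∫ y, ((if k = i then y else 1) * (if k = j then y else 1) : ℝ) ∂ν := by
          rw [hπ]
          exact cl_integral_pi_prod ν (fun k y => (if k = i then y else 1) * (if k = j then y else 1))
      _ = 0 := by
          refine Finset.prod_eq_zero (Finset.mem_univ i) ?_
          have : ∀ y : ℝ, ((if i = i then y else 1) * (if i = j then y else 1) : ℝ) = y := by
            intro y; simp [hij]
          rw [show (fun y : ℝ => ((if i = i then y else 1) * (if i = j then y else 1) : ℝ))
            = fun y : ℝ => y from funext this]
          exact hm
  have hEii : ∀ i : Fin n, ∫ x, x i * x i ∂π = q := by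
    intro i
    have h1 : ∀ x : Fin n → ℝ, x i * x i = ∏ j, (if j = i then x j * x j else 1) := by
      intro x; rw [Finset.prod_ite_eq' univ i (fun j => x j * x j)]; simp
    calc ∫ x, x i * x i ∂π = ∫ x, ∏ j, (if j = i then x j * x j else 1) ∂π := by
          congr 1; funext x; exact h1 x
      _ = ∏ j, ∫ y, (if j = i then y * y else 1 : ℝ) ∂ν := by
          rw [hπ]; exact cl_integral_pi_prod ν (fun j y => if j = i then y * y else 1)
      _ = ∏ j, (if j = i then q else 1) := by
          refine Finset.prod_congr rfl fun j _ => ?_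
          by_cases hji : j = i
          · simp only [if_pos hji, hq]
            congr 1; funext y; ring
          · simp [hji]
      _ = q := by rw [Finset.prod_ite_eq' univ i (fun _ => q)]; simp
  have hES : ∫ x, S x ∂π = 0 := by
    rw [hS]
    rw [integral_finset_sum univ (fun i _ => (hmemcoord i).integrable one_le_two)]
    simp [hEi]
  have hES2 : ∫ x, S x ^ 2 ∂π = n * q := by
    have h1 : ∀ x : Fin n → ℝ, S x ^ 2 = ∑ i, ∑ j, x i * x j := by
      intro x
      rw [hS, sq, Finset.sum_mul_sum]
    calc ∫ x, S x ^ 2 ∂π = ∫ x, ∑ i, ∑ j, x i * x j ∂π := by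
          congr 1; funext x; exact h1 x
      _ = ∑ i, ∫ x, ∑ j, x i * x j ∂π := by
          refine integral_finset_sum univ (fun i _ => ?_)
          exact integrable_finset_sum univ (fun j _ => (hmemprod i j).integrable one_le_two)
      _ = ∑ i : Fin n, (q : ℝ) := by
          refine Finset.sum_congr rfl fun i _ => ?_
          rw [integral_finset_sum univ (fun j _ => (hmemprod i j).integrable one_le_two)]
          rw [Finset.sum_eq_single i]
          · exact hEii i
          · intro j _ hji
            exact hEij i j (fun h => hji h.symm)
          · intro h; exact absurd (Finset.mem_univ i) h
      _ = n * q := by simp [mul_comm]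
  have hvarS : variance S π = n * q := by
    rw [variance_eq_sub hmemS]
    have hpow : (S ^ 2 : (Fin n → ℝ) → ℝ) = fun x => S x ^ 2 := by
      funext x; simp [Pi.pow_apply]
    rw [hpow]
    rw [hES2, hES]
    ring
  -- Chebyshev
  have hnpos : (0:ℝ) < n := Nat.cast_pos.mpr hn
  have hσ2q : 0 ≤ σ2 := hσ' ▸ variance_nonneg id ν
  have hcheb : π {x | (n:ℝ) * ε ≤ |S x|} ≤ ENNReal.ofReal (σ2 / (n * ε ^ 2)) := by
    have h := meas_ge_le_variance_div_sq (μ := π) hmemS (mul_pos hnpos hε)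
    rw [hES] at h
    simp only [sub_zero] at h
    rw [hvarS] at h
    convert h using 2
    rw [hσq]
    field_simp
  set A : Set (Fin n → ℝ) := {x | (∑ i, x i) / n ∈ Set.Ioo (-ε) ε} with hA
  have hAmeas : MeasurableSet A := (hSmeas.div_const _) measurableSet_Ioo
  have hmemA : ∀ x : Fin n → ℝ, x ∈ A ↔ |S x| < (n:ℝ) * ε := by
    intro x
    rw [hA]
    simp only [Set.mem_setOf_eq, Set.mem_Ioo, ← abs_lt]
    rw [show (∑ i, x i) = S x from rfl, abs_div, abs_of_pos hnpos,
      div_lt_iff₀ hnpos, mul_comm ε (n:ℝ)]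
  have hAcompl : Aᶜ = {x : Fin n → ℝ | (n:ℝ) * ε ≤ |S x|} := by
    ext x
    simp only [Set.mem_compl_iff, Set.mem_setOf_eq, hmemA x, not_lt]
  have step5 : ENNReal.ofReal (1 - σ2 / (n * ε ^ 2)) ≤ π A := by
    have h1 : π Aᶜ ≤ ENNReal.ofReal (σ2 / (n * ε ^ 2)) := by rw [hAcompl]; exact hcheb
    have h2 : π A + π Aᶜ = 1 := (measure_add_measure_compl hAmeas).trans measure_univ
    have h3 : (1:ℝ≥0∞) - π Aᶜ ≤ π A := by
      rw [tsub_le_iff_right]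
      exact h2.symm.le
    calc ENNReal.ofReal (1 - σ2 / (n * ε ^ 2))
        = ENNReal.ofReal 1 - ENNReal.ofReal (σ2 / (n * ε ^ 2)) :=
          ENNReal.ofReal_sub 1 (div_nonneg hσ2q (by positivity))
      _ ≤ 1 - π Aᶜ := by rw [ENNReal.ofReal_one]; exact tsub_le_tsub le_rfl h1
      _ ≤ π A := h3
  -- change of measure
  set T : Finset (Fin n → ℝ) := Fintype.piFinset (fun _ : Fin n => s) with hT
  set W : Finset (Fin n → ℝ) := T.filter (fun x => x ∈ A) with hW
  have hWA : ↑W ⊆ A := by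
    intro x hx
    rw [Finset.mem_coe, hW, Finset.mem_filter] at hx
    exact hx.2
  have hπTc : π ((↑T : Set (Fin n → ℝ)))ᶜ = 0 := by
    have hsub : (↑T : Set (Fin n → ℝ))ᶜ ⊆ ⋃ i, Function.eval i ⁻¹' ((↑s : Set ℝ)ᶜ) := by
      intro x hx
      simp only [Set.mem_compl_iff, Finset.mem_coe, hT, Fintype.mem_piFinset] at hx
      push_neg at hx
      obtain ⟨i, hi⟩ := hx
      exact Set.mem_iUnion.mpr ⟨i, hi⟩
    refine measure_mono_null hsub (measure_iUnion_null fun i => ?_)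
    rw [hπ]
    exact Measure.pi_eval_preimage_null (μ := fun _ : Fin n => ν) hνs
  have hπA_W : π A = π ↑W := by
    rw [← measure_inter_conull (μ := π) (s := A) hπTc]
    congr 1
    ext x
    simp only [Set.mem_inter_iff, Finset.mem_coe, hW, Finset.mem_filter, and_comm]
  have hsingν : ∀ x : Fin n → ℝ, π {x} = ∏ i, ν {x i} := by
    intro x
    rw [hπ, ← Set.univ_pi_singleton, Measure.pi_pi]
  have hsingμ : ∀ x : Fin n → ℝ, Measure.pi (fun _ : Fin n => μ) {x} = ∏ i, μ {x i} := by
    intro x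
    rw [← Set.univ_pi_singleton, Measure.pi_pi]
  have hμy : ∀ y : ℝ, μ {y} = ENNReal.ofReal (M * Real.exp (-(η * y))) * ν {y} := by
    intro y
    rw [hν_single y, ← mul_assoc, ← ENNReal.ofReal_mul (by positivity)]
    have h1 : (M * Real.exp (-(η * y))) * (Real.exp (η * y) / M) = 1 := by
      rw [div_eq_mul_inv]
      rw [show M * Real.exp (-(η * y)) * (Real.exp (η * y) * M⁻¹)
        = (Real.exp (-(η * y)) * Real.exp (η * y)) * (M * M⁻¹) from by ring]
      rw [← Real.exp_add, mul_inv_cancel₀ hMpos.ne']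
      simp
    rw [h1, ENNReal.ofReal_one, one_mul]
  set c : ℝ := Real.exp ((n:ℝ) * Λ η - (n:ℝ) * ε * |η|) with hc
  have hatom : ∀ x ∈ W, ENNReal.ofReal c * π {x} ≤ Measure.pi (fun _ : Fin n => μ) {x} := by
    intro x hxW
    have hxA : x ∈ A := hWA (Finset.mem_coe.mpr hxW)
    have h1 : Measure.pi (fun _ : Fin n => μ) {x}
        = ENNReal.ofReal (∏ i, (M * Real.exp (-(η * x i)))) * π {x} := by
      rw [hsingμ x, hsingν x]
      calc ∏ i, μ {x i}
          = ∏ i, (ENNReal.ofReal (M * Real.exp (-(η * x i))) * ν {x i}) :=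
            Finset.prod_congr rfl fun i _ => hμy (x i)
        _ = (∏ i, ENNReal.ofReal (M * Real.exp (-(η * x i)))) * ∏ i, ν {x i} :=
            Finset.prod_mul_distrib
        _ = ENNReal.ofReal (∏ i, (M * Real.exp (-(η * x i)))) * ∏ i, ν {x i} := by
            rw [ENNReal.ofReal_prod_of_nonneg (fun i _ => by positivity)]
    rw [h1]
    refine mul_le_mul_left (ENNReal.ofReal_le_ofReal ?_) _
    have hMexp : M = Real.exp (Λ η) := by
      rw [hΛ η, hFint η, Real.exp_log hMpos]
    have hprod : ∏ i, (M * Real.exp (-(η * x i))) = Real.exp ((n:ℝ) * Λ η - η * S x) := by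
      rw [Finset.prod_mul_distrib, Finset.prod_const, ← Real.exp_sum, hMexp,
        ← Real.exp_nat_mul, ← Real.exp_add]
      congr 1
      have hSx : S x = ∑ i, x i := rfl
      rw [hSx, Finset.mul_sum, Finset.sum_neg_distrib, Finset.card_univ, Fintype.card_fin]
      ring
    rw [hprod, hc]
    apply Real.exp_le_exp.mpr
    have hSb : |S x| ≤ (n:ℝ) * ε := le_of_lt ((hmemA x).mp hxA)
    have h2 : η * S x ≤ (n:ℝ) * ε * |η| := by
      calc η * S x ≤ |η * S x| := le_abs_self _
        _ = |η| * |S x| := abs_mul _ _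
        _ ≤ |η| * ((n:ℝ) * ε) := by
            exact mul_le_mul_of_nonneg_left hSb (abs_nonneg η)
        _ = (n:ℝ) * ε * |η| := by ring
    linarith
  have step6 : ENNReal.ofReal c * π A ≤ Measure.pi (fun _ : Fin n => μ) A := by
    rw [hπA_W, cl_measure_coe_finset π W, Finset.mul_sum]
    calc ∑ x ∈ W, ENNReal.ofReal c * π {x}
        ≤ ∑ x ∈ W, Measure.pi (fun _ : Fin n => μ) {x} :=
          Finset.sum_le_sum (fun x hx => hatom x hx)
      _ = Measure.pi (fun _ : Fin n => μ) ↑W := (cl_measure_coe_finset _ W).symm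
      _ ≤ Measure.pi (fun _ : Fin n => μ) A := measure_mono hWA
  -- conclusion
  by_cases hcase : 1 - σ2 / (n * ε ^ 2) ≤ 0
  · have hnp : Real.exp (-(n : ℝ) * (-Λ η + ε * |η|)) * (1 - σ2 / (n * ε ^ 2)) ≤ 0 :=
      mul_nonpos_iff.mpr (Or.inl ⟨(Real.exp_pos _).le, hcase⟩)
    rw [ENNReal.ofReal_eq_zero.mpr hnp]
    exact zero_le ..
  · rw [not_le] at hcase
    have hexp_eq : Real.exp (-(n : ℝ) * (-Λ η + ε * |η|)) = c := by
      rw [hc]; congr 1; ring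
    rw [ENNReal.ofReal_mul (Real.exp_pos _).le, hexp_eq]
    calc ENNReal.ofReal c * ENNReal.ofReal (1 - σ2 / (n * ε ^ 2))
        ≤ ENNReal.ofReal c * π A := mul_le_mul_right step5 _
      _ ≤ Measure.pi (fun _ : Fin n => μ) A := step6
end

section
/- (Rate-function optimization identity) For positive reals α_1,…,α_m, β_1,…,β_m, sup_{θ∈ℝ} ∑_{i=1}^{m} ( α_i + β_i − α_i^θ β_i^{1−θ} − β_i^θ α_i^{1−θ} ) = ∑_{i=1}^{m} (√α_i − √β_i)², and the supremum is attained at θ = 1/2. -/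
open Finset

lemma key_amgm (a b : ℝ) (ha : 0 < a) (hb : 0 < b) (θ : ℝ) :
    2 * (Real.sqrt a * Real.sqrt b) ≤ a ^ θ * b ^ (1 - θ) + b ^ θ * a ^ (1 - θ) := by
  set x := a ^ θ * b ^ (1 - θ) with hxdef
  set y := b ^ θ * a ^ (1 - θ) with hydef
  have hx : 0 ≤ x := by positivity
  have hy : 0 ≤ y := by positivity
  have hprod : x * y = a * b := by
    rw [hxdef, hydef]
    rw [show a ^ θ * b ^ (1 - θ) * (b ^ θ * a ^ (1 - θ)) =
      (a ^ θ * a ^ (1 - θ)) * (b ^ θ * b ^ (1 - θ)) by ring,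
      ← Real.rpow_add ha, ← Real.rpow_add hb]
    norm_num
  have hsx := Real.sq_sqrt hx
  have hsy := Real.sq_sqrt hy
  have hsq : Real.sqrt x * Real.sqrt y = Real.sqrt a * Real.sqrt b := by
    rw [← Real.sqrt_mul hx, hprod, Real.sqrt_mul ha.le]
  nlinarith [sq_nonneg (Real.sqrt x - Real.sqrt y)]

lemma half_val (a b : ℝ) (ha : 0 < a) (hb : 0 < b) :
    a + b - a ^ ((1 : ℝ) / 2) * b ^ (1 - (1 : ℝ) / 2) - b ^ ((1 : ℝ) / 2) * a ^ (1 - (1 : ℝ) / 2)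
      = (Real.sqrt a - Real.sqrt b) ^ 2 := by
  have h1 : a ^ ((1 : ℝ) / 2) = Real.sqrt a := by rw [← Real.sqrt_eq_rpow]
  have h2 : b ^ ((1 : ℝ) / 2) = Real.sqrt b := by rw [← Real.sqrt_eq_rpow]
  have h3 : (1 : ℝ) - 1 / 2 = 1 / 2 := by norm_num
  rw [h3, h1, h2]
  have := Real.sq_sqrt ha.le
  have := Real.sq_sqrt hb.le
  ring_nf
  nlinarith [Real.sq_sqrt ha.le, Real.sq_sqrt hb.le]

theorem rate_optimization (m : ℕ) (α β : Fin m → ℝ)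
    (hα : ∀ i, 0 < α i) (hβ : ∀ i, 0 < β i) :
    (⨆ θ : ℝ, ∑ i, (α i + β i - α i ^ θ * β i ^ (1 - θ) - β i ^ θ * α i ^ (1 - θ))) =
        ∑ i, (Real.sqrt (α i) - Real.sqrt (β i)) ^ 2 ∧
      (∑ i, (α i + β i - α i ^ ((1 : ℝ) / 2) * β i ^ (1 - (1 : ℝ) / 2) -
          β i ^ ((1 : ℝ) / 2) * α i ^ (1 - (1 : ℝ) / 2))) =
        ∑ i, (Real.sqrt (α i) - Real.sqrt (β i)) ^ 2 := by
  have hhalf : (∑ i, (α i + β i - α i ^ ((1 : ℝ) / 2) * β i ^ (1 - (1 : ℝ) / 2) -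
      β i ^ ((1 : ℝ) / 2) * α i ^ (1 - (1 : ℝ) / 2))) =
      ∑ i, (Real.sqrt (α i) - Real.sqrt (β i)) ^ 2 :=
    Finset.sum_congr rfl fun i _ => half_val _ _ (hα i) (hβ i)
  have hub : ∀ θ : ℝ, (∑ i, (α i + β i - α i ^ θ * β i ^ (1 - θ) - β i ^ θ * α i ^ (1 - θ)))
      ≤ ∑ i, (Real.sqrt (α i) - Real.sqrt (β i)) ^ 2 := by
    intro θ
    apply Finset.sum_le_sum
    intro i _
    have hk := key_amgm _ _ (hα i) (hβ i) θ
    have h1 := Real.sq_sqrt (hα i).le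
    have h2 := Real.sq_sqrt (hβ i).le
    nlinarith
  constructor
  · apply le_antisymm
    · exact ciSup_le hub
    · rw [← hhalf]
      exact le_ciSup (f := fun θ : ℝ => ∑ i, (α i + β i - α i ^ θ * β i ^ (1 - θ) -
        β i ^ θ * α i ^ (1 - θ)))
        ⟨_, Set.forall_mem_range.2 hub⟩ ((1 : ℝ) / 2)
  · exact hhalf
end
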